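/- arXiv:2305.06250 — 4 statements merged into one kernel-verified Lean document; each statement's English description precedes it below -/
import Mathlib

section
/- Let X₁, X₂, X₃ be pairwise independent random variables on finite alphabets, each a deterministic function of the other two, with common support size k. Then H(X₁) = H(X₂) = H(X₃) = log k and H(X₁,X₂) = H(X₁,X₃) = H(X₂,X₃) = H(X₁,X₂,X₃) = 2 log k. -/
open Finset

noncomputable def marg1 {A B C : Type} [Fintype B] [Fintype C]
    (p : A × B × C → ℝ) (x : A) : ℝ := ∑ y, ∑ z, p (x, y, z)

noncomputable def marg2 {A B C : Type} [Fintype A] [Fintype C]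
    (p : A × B × C → ℝ) (y : B) : ℝ := ∑ x, ∑ z, p (x, y, z)

noncomputable def marg3 {A B C : Type} [Fintype A] [Fintype B]
    (p : A × B × C → ℝ) (z : C) : ℝ := ∑ x, ∑ y, p (x, y, z)

noncomputable def marg12 {A B C : Type} [Fintype C]
    (p : A × B × C → ℝ) (x : A) (y : B) : ℝ := ∑ z, p (x, y, z)

noncomputable def marg13 {A B C : Type} [Fintype B]
    (p : A × B × C → ℝ) (x : A) (z : C) : ℝ := ∑ y, p (x, y, z)

noncomputable def marg23 {A B C : Type} [Fintype A]
    (p : A × B × C → ℝ) (y : B) (z : C) : ℝ := ∑ x, p (x, y, z)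

lemma aux_sum_two_valued {ι : Type*} [Fintype ι] (f : ι → ℝ) (c : ℝ) (hc : 0 < c)
    (hf : ∀ i, f i = 0 ∨ f i = c) :
    ∑ i, f i = (Finset.univ.filter fun i => 0 < f i).card * c := by
  rw [← Finset.sum_filter_of_ne (p := fun i => 0 < f i) (f := f)
    (by intro i _ h
        rcases hf i with h0 | h0
        · simp [h0] at h
        · rw [h0]; exact hc)]
  rw [Finset.sum_congr rfl (fun i hi => ?_), Finset.sum_const, nsmul_eq_mul]
  rcases hf i with h0 | h0
  · simp [Finset.mem_filter, h0] at hi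
  · exact h0

lemma aux_ent_two_valued {ι : Type*} [Fintype ι] (f : ι → ℝ) (c : ℝ) (k : ℕ) (hc : 0 < c)
    (hf : ∀ i, f i = 0 ∨ f i = c)
    (hk : (Finset.univ.filter fun i => 0 < f i).card = k) :
    ∑ i, f i * Real.logb 2 (f i) = k * (c * Real.logb 2 c) := by
  rw [← Finset.sum_filter_of_ne (p := fun i => 0 < f i)
    (f := fun i => f i * Real.logb 2 (f i))
    (by intro i _ h
        rcases hf i with h0 | h0
        · simp [h0] at h
        · rw [h0]; exact hc)]
  rw [Finset.sum_congr rfl (fun i hi => ?_), Finset.sum_const, hk, nsmul_eq_mul]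
  rcases hf i with h0 | h0
  · simp [Finset.mem_filter, h0] at hi
  · rw [h0]

lemma aux_ent_mul (a b : ℝ) (ha : 0 ≤ a) (hb : 0 ≤ b) :
    a * b * Real.logb 2 (a * b)
      = b * (a * Real.logb 2 a) + a * (b * Real.logb 2 b) := by
  rcases ha.eq_or_lt with h | h
  · simp [← h]
  rcases hb.eq_or_lt with h' | h'
  · simp [← h']
  rw [Real.logb_mul h.ne' h'.ne']; ring

/-- If X₁, X₂, X₃ are pairwise independent finite random variables, each a
deterministic function of the other two, with common support size k, then
H(Xᵢ) = log₂ k and all joint entropies of two or three of them equal 2·log₂ k;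
i.e. the entropy function of (X₁,X₂,X₃) is (log₂ k)·r(U_{2,3}). -/
theorem pairwise_indep_functional_triple_entropies
    (m₁ m₂ m₃ k : ℕ) (p : Fin m₁ × Fin m₂ × Fin m₃ → ℝ)
    (hp : ∀ x, 0 ≤ p x) (hsum : (∑ x, p x) = 1)
    (hind12 : ∀ x y, marg12 p x y = marg1 p x * marg2 p y)
    (hind13 : ∀ x z, marg13 p x z = marg1 p x * marg3 p z)
    (hind23 : ∀ y z, marg23 p y z = marg2 p y * marg3 p z)
    (hfun : ∀ x y z, 0 < p (x, y, z) →
      p (x, y, z) = marg12 p x y ∧ p (x, y, z) = marg13 p x z ∧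
      p (x, y, z) = marg23 p y z)
    (hk1 : (Finset.univ.filter fun x => 0 < marg1 p x).card = k)
    (hk2 : (Finset.univ.filter fun y => 0 < marg2 p y).card = k)
    (hk3 : (Finset.univ.filter fun z => 0 < marg3 p z).card = k) :
    (-∑ x, marg1 p x * Real.logb 2 (marg1 p x)) = Real.logb 2 k ∧
    (-∑ y, marg2 p y * Real.logb 2 (marg2 p y)) = Real.logb 2 k ∧
    (-∑ z, marg3 p z * Real.logb 2 (marg3 p z)) = Real.logb 2 k ∧
    (-∑ x, ∑ y, marg12 p x y * Real.logb 2 (marg12 p x y)) = 2 * Real.logb 2 k ∧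
    (-∑ x, ∑ z, marg13 p x z * Real.logb 2 (marg13 p x z)) = 2 * Real.logb 2 k ∧
    (-∑ y, ∑ z, marg23 p y z * Real.logb 2 (marg23 p y z)) = 2 * Real.logb 2 k ∧
    (-∑ w, p w * Real.logb 2 (p w)) = 2 * Real.logb 2 k := by
  classical
  have hm1nn : ∀ x, 0 ≤ marg1 p x := fun x =>
    Finset.sum_nonneg fun y _ => Finset.sum_nonneg fun z _ => hp _
  have hm2nn : ∀ y, 0 ≤ marg2 p y := fun y =>
    Finset.sum_nonneg fun x _ => Finset.sum_nonneg fun z _ => hp _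
  have hm3nn : ∀ z, 0 ≤ marg3 p z := fun z =>
    Finset.sum_nonneg fun x _ => Finset.sum_nonneg fun y _ => hp _
  have hple1 : ∀ x y z, p (x, y, z) ≤ marg1 p x := by
    intro x y z
    calc p (x, y, z) ≤ ∑ z', p (x, y, z') :=
          Finset.single_le_sum (f := fun z' => p (x, y, z'))
            (fun i _ => hp _) (Finset.mem_univ z)
      _ ≤ ∑ y', ∑ z', p (x, y', z') :=
          Finset.single_le_sum (f := fun y' => ∑ z', p (x, y', z'))
            (fun i _ => Finset.sum_nonneg fun j _ => hp _) (Finset.mem_univ y)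
      _ = marg1 p x := rfl
  have hple2 : ∀ x y z, p (x, y, z) ≤ marg2 p y := by
    intro x y z
    calc p (x, y, z) ≤ ∑ z', p (x, y, z') :=
          Finset.single_le_sum (f := fun z' => p (x, y, z'))
            (fun i _ => hp _) (Finset.mem_univ z)
      _ ≤ ∑ x', ∑ z', p (x', y, z') :=
          Finset.single_le_sum (f := fun x' => ∑ z', p (x', y, z'))
            (fun i _ => Finset.sum_nonneg fun j _ => hp _) (Finset.mem_univ x)
      _ = marg2 p y := rfl
  -- key: marginals agree at any positive point
  have key : ∀ x y z, 0 < p (x, y, z) →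
      marg1 p x = marg2 p y ∧ marg2 p y = marg3 p z := by
    intro x y z h
    obtain ⟨h12, h13, h23⟩ := hfun x y z h
    rw [hind12] at h12; rw [hind13] at h13; rw [hind23] at h23
    have h1 : 0 < marg1 p x := by
      rcases (hm1nn x).eq_or_lt with h0 | h0
      · rw [← h0, zero_mul] at h12; linarith
      · exact h0
    have h2 : 0 < marg2 p y := by
      rcases (hm2nn y).eq_or_lt with h0 | h0
      · rw [← h0, mul_zero] at h12; linarith
      · exact h0
    have e23 : marg2 p y = marg3 p z :=
      mul_left_cancel₀ h1.ne' (h12.symm.trans h13)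
    have e13 : marg1 p x = marg3 p z := by
      have : marg2 p y * marg1 p x = marg2 p y * marg3 p z := by
        rw [mul_comm]; exact h12.symm.trans h23
      exact mul_left_cancel₀ h2.ne' this
    exact ⟨e13.trans e23.symm, e23⟩
  -- a positive point
  obtain ⟨⟨a, b, d⟩, hw⟩ : ∃ w, 0 < p w := by
    by_contra hcon
    push_neg at hcon
    have : (∑ w, p w) ≤ 0 := Finset.sum_nonpos fun w _ => hcon w
    rw [hsum] at this; linarith
  set c := marg1 p a with hcdef
  have hca : 0 < c := lt_of_lt_of_le hw (hple1 a b d)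
  obtain ⟨eab, ebd⟩ := key a b d hw
  have hcb : marg2 p b = c := eab.symm
  have hcd : marg3 p d = c := by rw [← ebd, hcb]
  -- uniformity of the marginals
  have hu1 : ∀ x, marg1 p x = 0 ∨ marg1 p x = c := by
    intro x
    rcases (hm1nn x).eq_or_lt with h0 | h0
    · exact Or.inl h0.symm
    right
    have hpos : 0 < marg13 p x d := by
      rw [hind13, hcd]; exact mul_pos h0 hca
    obtain ⟨y, hy⟩ : ∃ y, 0 < p (x, y, d) := by
      by_contra hcon
      push_neg at hcon
      have : marg13 p x d ≤ 0 := Finset.sum_nonpos fun y _ => hcon y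
      linarith
    obtain ⟨e1, e2⟩ := key x y d hy
    rw [e1, e2, hcd]
  have hu2 : ∀ y, marg2 p y = 0 ∨ marg2 p y = c := by
    intro y
    rcases (hm2nn y).eq_or_lt with h0 | h0
    · exact Or.inl h0.symm
    right
    have hpos : 0 < marg23 p y d := by
      rw [hind23, hcd]; exact mul_pos h0 hca
    obtain ⟨x, hx⟩ : ∃ x, 0 < p (x, y, d) := by
      by_contra hcon
      push_neg at hcon
      have : marg23 p y d ≤ 0 := Finset.sum_nonpos fun x _ => hcon x
      linarith
    obtain ⟨e1, e2⟩ := key x y d hx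
    rw [e2, hcd]
  have hu3 : ∀ z, marg3 p z = 0 ∨ marg3 p z = c := by
    intro z
    rcases (hm3nn z).eq_or_lt with h0 | h0
    · exact Or.inl h0.symm
    right
    have hpos : 0 < marg13 p a z := by
      rw [hind13, ← hcdef]; exact mul_pos hca h0
    obtain ⟨y, hy⟩ : ∃ y, 0 < p (a, y, z) := by
      by_contra hcon
      push_neg at hcon
      have : marg13 p a z ≤ 0 := Finset.sum_nonpos fun y _ => hcon y
      linarith
    obtain ⟨e1, e2⟩ := key a y z hy
    rw [← e2, ← e1]
  -- marginals sum to 1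
  have hsum' : ∑ x, ∑ y, ∑ z, p (x, y, z) = 1 := by
    rw [← hsum]; simp [Fintype.sum_prod_type]
  have hs1 : ∑ x, marg1 p x = 1 := by simpa [marg1] using hsum'
  have hs2 : ∑ y, marg2 p y = 1 := by
    simp only [marg2]; rw [Finset.sum_comm]; exact hsum'
  have hs3 : ∑ z, marg3 p z = 1 := by
    have h : ∑ z, marg3 p z = ∑ x, ∑ z, ∑ y, p (x, y, z) := by
      simp only [marg3]; exact Finset.sum_comm
    rw [h, ← hsum']
    exact Finset.sum_congr rfl fun x _ => Finset.sum_comm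
  -- c = 1/k
  have hkc : (k : ℝ) * c = 1 := by
    have h := aux_sum_two_valued (fun x => marg1 p x) c hca hu1
    rw [hs1, hk1] at h
    exact h.symm
  have hkne : (k : ℝ) ≠ 0 := by
    intro h; rw [h, zero_mul] at hkc; linarith
  have hcval : c = (k : ℝ)⁻¹ := by
    field_simp at hkc ⊢; linarith [hkc]
  have hlogc : Real.logb 2 c = -Real.logb 2 k := by
    rw [hcval, Real.logb_inv]
  -- single entropies
  have H1 : ∑ x, marg1 p x * Real.logb 2 (marg1 p x) = -Real.logb 2 k := by
    rw [aux_ent_two_valued _ c k hca hu1 hk1, hlogc, hcval,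
      ← mul_assoc, mul_inv_cancel₀ hkne, one_mul]
  have H2 : ∑ y, marg2 p y * Real.logb 2 (marg2 p y) = -Real.logb 2 k := by
    rw [aux_ent_two_valued _ c k hca hu2 hk2, hlogc, hcval,
      ← mul_assoc, mul_inv_cancel₀ hkne, one_mul]
  have H3 : ∑ z, marg3 p z * Real.logb 2 (marg3 p z) = -Real.logb 2 k := by
    rw [aux_ent_two_valued _ c k hca hu3 hk3, hlogc, hcval,
      ← mul_assoc, mul_inv_cancel₀ hkne, one_mul]
  -- pair entropies
  have H12 : ∑ x, ∑ y, marg12 p x y * Real.logb 2 (marg12 p x y)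
      = -(2 * Real.logb 2 k) := by
    have e : ∀ x, ∑ y, marg12 p x y * Real.logb 2 (marg12 p x y)
        = marg1 p x * Real.logb 2 (marg1 p x)
          + marg1 p x * ∑ y, marg2 p y * Real.logb 2 (marg2 p y) := by
      intro x
      simp only [hind12]
      rw [Finset.sum_congr rfl fun y _ =>
        aux_ent_mul (marg1 p x) (marg2 p y) (hm1nn x) (hm2nn y)]
      rw [Finset.sum_add_distrib, ← Finset.sum_mul, ← Finset.mul_sum, hs2, one_mul]
    rw [Finset.sum_congr rfl fun x _ => e x, Finset.sum_add_distrib,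
      ← Finset.sum_mul, H1, hs1, one_mul, H2]
    ring
  have H13 : ∑ x, ∑ z, marg13 p x z * Real.logb 2 (marg13 p x z)
      = -(2 * Real.logb 2 k) := by
    have e : ∀ x, ∑ z, marg13 p x z * Real.logb 2 (marg13 p x z)
        = marg1 p x * Real.logb 2 (marg1 p x)
          + marg1 p x * ∑ z, marg3 p z * Real.logb 2 (marg3 p z) := by
      intro x
      simp only [hind13]
      rw [Finset.sum_congr rfl fun z _ =>
        aux_ent_mul (marg1 p x) (marg3 p z) (hm1nn x) (hm3nn z)]
      rw [Finset.sum_add_distrib, ← Finset.sum_mul, ← Finset.mul_sum, hs3, one_mul]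
    rw [Finset.sum_congr rfl fun x _ => e x, Finset.sum_add_distrib,
      ← Finset.sum_mul, H1, hs1, one_mul, H3]
    ring
  have H23 : ∑ y, ∑ z, marg23 p y z * Real.logb 2 (marg23 p y z)
      = -(2 * Real.logb 2 k) := by
    have e : ∀ y, ∑ z, marg23 p y z * Real.logb 2 (marg23 p y z)
        = marg2 p y * Real.logb 2 (marg2 p y)
          + marg2 p y * ∑ z, marg3 p z * Real.logb 2 (marg3 p z) := by
      intro y
      simp only [hind23]
      rw [Finset.sum_congr rfl fun z _ =>
        aux_ent_mul (marg2 p y) (marg3 p z) (hm2nn y) (hm3nn z)]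
      rw [Finset.sum_add_distrib, ← Finset.sum_mul, ← Finset.mul_sum, hs3, one_mul]
    rw [Finset.sum_congr rfl fun y _ => e y, Finset.sum_add_distrib,
      ← Finset.sum_mul, H2, hs2, one_mul, H3]
    ring
  -- triple entropy
  have hpv : ∀ w, p w = 0 ∨ p w = c * c := by
    rintro ⟨x, y, z⟩
    rcases (hp (x, y, z)).eq_or_lt with h0 | h0
    · exact Or.inl h0.symm
    right
    have h12 := (hfun x y z h0).1
    rw [hind12] at h12
    have hx : marg1 p x = c := by
      rcases hu1 x with h | h
      · exfalso; have := lt_of_lt_of_le h0 (hple1 x y z); rw [h] at this; linarith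
      · exact h
    have hy : marg2 p y = c := by
      rcases hu2 y with h | h
      · exfalso; have := lt_of_lt_of_le h0 (hple2 x y z); rw [h] at this; linarith
      · exact h
    rw [h12, hx, hy]
  have Hw : ∑ w, p w * Real.logb 2 (p w) = -(2 * Real.logb 2 k) := by
    have e : ∀ w, p w * Real.logb 2 (p w) = p w * Real.logb 2 (c * c) := by
      intro w
      rcases hpv w with h | h
      · simp [h]
      · rw [h]
    rw [Finset.sum_congr rfl fun w _ => e w, ← Finset.sum_mul, hsum, one_mul,
      Real.logb_mul hca.ne' hca.ne', hlogc]
    ring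
  refine ⟨?_, ?_, ?_, ?_, ?_, ?_, ?_⟩
  · rw [H1, neg_neg]
  · rw [H2, neg_neg]
  · rw [H3, neg_neg]
  · rw [H12, neg_neg]
  · rw [H13, neg_neg]
  · rw [H23, neg_neg]
  · rw [Hw, neg_neg]
end

section
/- Let (X₁,X₂,X₃,X₄) be a random vector on finite alphabets whose entropy function equals a·r₁ + b·r₂ with r₁, r₂ the rank functions of U^{123}_{2,3} and U^{124}_{2,3} respectively. Then X₃ and X₄ are each uniformly distributed on their supports. -/
open Finset

/-- Probability that the discrete random variable `Y` (on finite sample space `Ω`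
with pmf `p`) takes the value `s`. -/
noncomputable def pr {Ω : Type} [Fintype Ω] {S : Type} [DecidableEq S]
    (p : Ω → ℝ) (Y : Ω → S) (s : S) : ℝ := ∑ ω, if Y ω = s then p ω else 0

/-- Shannon entropy (base 2) of the discrete random variable `Y`. -/
noncomputable def ent {Ω : Type} [Fintype Ω] {S : Type} [DecidableEq S]
    (p : Ω → ℝ) (Y : Ω → S) : ℝ :=
  - ∑ s ∈ Finset.univ.image Y, pr p Y s * Real.logb 2 (pr p Y s)

/-- `h : 2^{N_n} → ℝ` is entropic: it is the entropy function of some random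
vector `(X_1, …, X_n)` on finite alphabets. -/
def IsEntropic (n : ℕ) (h : Finset (Fin n) → ℝ) : Prop :=
  ∃ (m : Fin n → ℕ) (p : (∀ i, Fin (m i)) → ℝ),
    (∀ x, 0 ≤ p x) ∧ (∑ x, p x) = 1 ∧
    ∀ A : Finset (Fin n), h A = ent p (fun x (i : A) => x i.1)

/-- Rank function of the matroid U^{B}_{k,|B|} on N₄ = {0,1,2,3}. -/
noncomputable def rkU (k : ℕ) (B : Finset (Fin 4)) (A : Finset (Fin 4)) : ℝ :=
  min (k : ℝ) ((A ∩ B).card : ℝ)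

section general
variable {Ω : Type} [Fintype Ω] {S : Type} [DecidableEq S] {T : Type} [DecidableEq T]

lemma pr_nonneg (p : Ω → ℝ) (hp : ∀ x, 0 ≤ p x) (Y : Ω → S) (s : S) : 0 ≤ pr p Y s :=
  Finset.sum_nonneg fun ω _ => by by_cases h : Y ω = s <;> simp [h, hp ω]

lemma single_le_pr (p : Ω → ℝ) (hp : ∀ x, 0 ≤ p x) (Y : Ω → S) (ω : Ω) :
    p ω ≤ pr p Y (Y ω) := by
  have h := Finset.single_le_sum (f := fun ω' => if Y ω' = Y ω then p ω' else 0)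
    (fun i _ => by by_cases hh : Y i = Y ω <;> simp [hh, hp i]) (Finset.mem_univ ω)
  simpa [pr] using h

lemma pr_pos_elim (p : Ω → ℝ) (hp : ∀ x, 0 ≤ p x) (Y : Ω → S) (s : S)
    (h : 0 < pr p Y s) : ∃ ω, 0 < p ω ∧ Y ω = s := by
  by_contra hc
  push_neg at hc
  have hz : pr p Y s = 0 := by
    refine Finset.sum_eq_zero fun ω _ => ?_
    by_cases hY : Y ω = s
    · have h0 : p ω = 0 := le_antisymm (not_lt.1 fun hpω => hc ω hpω hY) (hp ω)
      simp [hY, h0]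
    · simp [hY]
  rw [hz] at h
  exact lt_irrefl 0 h

lemma pr_congr (p : Ω → ℝ) {Y : Ω → S} {Z : Ω → T} {s : S} {t : T}
    (h : ∀ ω, Y ω = s ↔ Z ω = t) : pr p Y s = pr p Z t :=
  Finset.sum_congr rfl fun ω _ => if_congr (h ω) rfl rfl

lemma sum_pr [Fintype S] (p : Ω → ℝ) (Y : Ω → S) : ∑ s, pr p Y s = ∑ ω, p ω := by
  unfold pr
  rw [Finset.sum_comm]
  refine Finset.sum_congr rfl fun ω _ => ?_
  simp [Finset.sum_ite_eq' Finset.univ (Y ω) (fun _ => p ω)]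

lemma pr_of_not_mem_image (p : Ω → ℝ) (Y : Ω → S) (s : S)
    (h : s ∉ Finset.univ.image Y) : pr p Y s = 0 := by
  refine Finset.sum_eq_zero fun ω _ => ?_
  have : Y ω ≠ s := fun he => h (Finset.mem_image.2 ⟨ω, Finset.mem_univ ω, he⟩)
  simp [this]

lemma ent_eq_univ [Fintype S] (p : Ω → ℝ) (Y : Ω → S) :
    ent p Y = - ∑ s : S, pr p Y s * Real.logb 2 (pr p Y s) := by
  unfold ent
  congr 1
  refine Finset.sum_subset (Finset.subset_univ _) fun s _ hs => ?_
  rw [pr_of_not_mem_image p Y s hs]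
  simp

lemma pr_fst [Fintype T] (p : Ω → ℝ) (Y : Ω → S) (Z : Ω → T) (y : S) :
    pr p Y y = ∑ z : T, pr p (fun ω => (Y ω, Z ω)) (y, z) := by
  unfold pr
  rw [Finset.sum_comm]
  refine Finset.sum_congr rfl fun ω _ => ?_
  by_cases hy : Y ω = y
  · simp [hy, Prod.ext_iff, Finset.sum_ite_eq' Finset.univ (Z ω) (fun _ => p ω)]
  · simp [hy, Prod.ext_iff]

lemma ent_comp_inj (p : Ω → ℝ) (Y : Ω → S) (e : S → T) (he : Function.Injective e) :
    ent p (fun ω => e (Y ω)) = ent p Y := by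
  unfold ent
  have himg : Finset.univ.image (fun ω => e (Y ω)) = (Finset.univ.image Y).image e := by
    rw [Finset.image_image]
    rfl
  rw [himg, Finset.sum_image (fun x _ y _ h => he h)]
  congr 1
  refine Finset.sum_congr rfl fun s _ => ?_
  have hpr : pr p (fun ω => e (Y ω)) (e s) = pr p Y s :=
    pr_congr p fun ω => by simp [he.eq_iff]
  rw [hpr]

end general

section core
variable {Ω : Type} [Fintype Ω] {S : Type} [DecidableEq S] {T : Type} [DecidableEq T]

lemma gibbs {ι : Type} [Fintype ι] (f g : ι → ℝ) (hf : ∀ i, 0 ≤ f i) (hg : ∀ i, 0 ≤ g i)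
    (hfs : ∑ i, f i = 1) (hgs : ∑ i, g i = 1)
    (hgpos : ∀ i, 0 < f i → 0 < g i)
    (heq : ∑ i, f i * Real.log (f i) = ∑ i, f i * Real.log (g i)) :
    ∀ i, f i = g i := by
  classical
  set s := Finset.univ.filter (fun i => 0 < f i) with hs
  have hfo : ∀ i ∉ s, f i = 0 := by
    intro i hi
    simp only [hs, Finset.mem_filter, Finset.mem_univ, true_and, not_lt] at hi
    exact le_antisymm hi (hf i)
  have hterm : ∀ i ∈ s, f i * (Real.log (g i) - Real.log (f i)) ≤ g i - f i := by
    intro i hi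
    simp only [hs, Finset.mem_filter, Finset.mem_univ, true_and] at hi
    have hgi : 0 < g i := hgpos i hi
    have hlog := Real.log_le_sub_one_of_pos (div_pos hgi hi)
    rw [Real.log_div hgi.ne' hi.ne'] at hlog
    have := mul_le_mul_of_nonneg_left hlog hi.le
    have hdd : f i * (g i / f i - 1) = g i - f i := by field_simp
    linarith [hdd ▸ this]
  have hsum0 : ∑ i ∈ s, f i * (Real.log (g i) - Real.log (f i)) = 0 := by
    have hext : ∑ i ∈ s, f i * (Real.log (g i) - Real.log (f i))
        = ∑ i, f i * (Real.log (g i) - Real.log (f i)) := by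
      refine Finset.sum_subset (Finset.subset_univ _) fun i _ hi => ?_
      rw [hfo i hi]; ring
    rw [hext]
    have : ∑ i, f i * (Real.log (g i) - Real.log (f i))
        = ∑ i, f i * Real.log (g i) - ∑ i, f i * Real.log (f i) := by
      rw [← Finset.sum_sub_distrib]; congr 1; ext i; ring
    rw [this, ← heq, sub_self]
  have hfs' : ∑ i ∈ s, f i = 1 := by
    rw [← hfs]
    exact Finset.sum_subset (Finset.subset_univ _) fun i _ hi => hfo i hi
  have hgs' : ∑ i ∈ s, g i ≤ 1 := by
    rw [← hgs]
    exact Finset.sum_le_sum_of_subset_of_nonneg (Finset.subset_univ _) fun i _ _ => hg i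
  have hdiff : ∑ i ∈ s, (g i - f i) ≤ 0 := by
    rw [Finset.sum_sub_distrib, hfs']; linarith
  have hzero : ∀ i ∈ s, (g i - f i) - f i * (Real.log (g i) - Real.log (f i)) = 0 := by
    have hnn : ∀ i ∈ s, 0 ≤ (g i - f i) - f i * (Real.log (g i) - Real.log (f i)) :=
      fun i hi => sub_nonneg.2 (hterm i hi)
    have hsle : ∑ i ∈ s, ((g i - f i) - f i * (Real.log (g i) - Real.log (f i))) ≤ 0 := by
      rw [Finset.sum_sub_distrib, hsum0]; linarith
    have := Finset.sum_eq_zero_iff_of_nonneg hnn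
    exact this.1 (le_antisymm hsle (Finset.sum_nonneg hnn))
  have hmain : ∀ i ∈ s, f i = g i := by
    intro i hi
    have hif : 0 < f i := by simpa [hs] using hi
    have hgi : 0 < g i := hgpos i hif
    by_contra hne
    have hx1 : g i / f i ≠ 1 := by
      intro h1
      exact hne ((div_eq_one_iff_eq hif.ne').1 h1).symm
    have hlog := Real.log_lt_sub_one_of_pos (div_pos hgi hif) hx1
    rw [Real.log_div hgi.ne' hif.ne'] at hlog
    have hst := mul_lt_mul_of_pos_left hlog hif
    have hdd : f i * (g i / f i - 1) = g i - f i := by field_simp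
    rw [hdd] at hst
    have := hzero i hi
    linarith
  -- equality of total g on s, hence g = 0 off s
  have hgsum1 : ∑ i ∈ s, g i = 1 := by
    have h1 : ∑ i ∈ s, (g i - f i) = 0 := by
      have h2 : ∑ i ∈ s, (g i - f i) = ∑ i ∈ s, ((g i - f i) - f i * (Real.log (g i) - Real.log (f i)))
          + ∑ i ∈ s, f i * (Real.log (g i) - Real.log (f i)) := by
        rw [← Finset.sum_add_distrib]; congr 1; ext i; ring
      rw [h2, hsum0, Finset.sum_congr rfl hzero]
      simp
    rw [Finset.sum_sub_distrib, hfs'] at h1; linarith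
  have hgoff : ∀ i ∉ s, g i = 0 := by
    have hsplit := Finset.sum_filter_add_sum_filter_not Finset.univ (fun i => 0 < f i) g
    rw [← hs] at hsplit
    rw [hgsum1, hgs] at hsplit
    have h0 : ∑ i ∈ Finset.univ.filter (fun i => ¬ 0 < f i), g i = 0 := by linarith
    intro i hi
    refine (Finset.sum_eq_zero_iff_of_nonneg fun j _ => hg j).1 h0 i ?_
    simp only [Finset.mem_filter, Finset.mem_univ, true_and]
    simpa [hs, Finset.mem_filter] using hi
  intro i
  by_cases hi : i ∈ s
  · exact hmain i hi
  · rw [hfo i hi, hgoff i hi]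

lemma cond_det [Fintype S] [Fintype T] (p : Ω → ℝ) (hp : ∀ x, 0 ≤ p x)
    (V : Ω → S) (W : Ω → T)
    (h : ent p (fun ω => (V ω, W ω)) = ent p V) :
    ∀ v w, 0 < pr p (fun ω => (V ω, W ω)) (v, w) →
      pr p (fun ω => (V ω, W ω)) (v, w) = pr p V v := by
  classical
  set P : S × T → ℝ := pr p (fun ω => (V ω, W ω)) with hP
  have hPn : ∀ q, 0 ≤ P q := fun q => pr_nonneg p hp _ q
  have hQ : ∀ v, pr p V v = ∑ w, P (v, w) := fun v => pr_fst p V W v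
  have hPQ : ∀ v w, P (v, w) ≤ pr p V v := by
    intro v w
    rw [hQ v]
    exact Finset.single_le_sum (fun w' _ => hPn (v, w')) (Finset.mem_univ w)
  have h1 : ent p (fun ω => (V ω, W ω)) = - ∑ q : S × T, P q * Real.logb 2 (P q) :=
    ent_eq_univ p _
  have h2 : ent p V = - ∑ q : S × T, P q * Real.logb 2 (pr p V q.1) := by
    rw [ent_eq_univ p V]
    congr 1
    rw [Fintype.sum_prod_type]
    refine Finset.sum_congr rfl fun v _ => ?_
    nth_rewrite 1 [hQ v]
    rw [Finset.sum_mul]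
  have hkey : ∑ q : S × T, P q * (Real.logb 2 (pr p V q.1) - Real.logb 2 (P q)) = 0 := by
    have : ∑ q : S × T, P q * (Real.logb 2 (pr p V q.1) - Real.logb 2 (P q))
        = ∑ q : S × T, P q * Real.logb 2 (pr p V q.1) - ∑ q : S × T, P q * Real.logb 2 (P q) := by
      rw [← Finset.sum_sub_distrib]; congr 1; ext q; ring
    rw [this]
    rw [h1, h2] at h
    linarith [neg_injective h]
  have hnn : ∀ q : S × T, 0 ≤ P q * (Real.logb 2 (pr p V q.1) - Real.logb 2 (P q)) := by
    intro q
    rcases eq_or_lt_of_le (hPn q) with hq | hq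
    · rw [← hq]; simp
    · have hle : Real.logb 2 (P q) ≤ Real.logb 2 (pr p V q.1) :=
        Real.logb_le_logb_of_le one_lt_two hq (by simpa [hP] using hPQ q.1 q.2)
      have := sub_nonneg.2 hle
      positivity
  have hzero := (Finset.sum_eq_zero_iff_of_nonneg fun q _ => hnn q).1 hkey
  intro v w hpos
  have hz := hzero (v, w) (Finset.mem_univ _)
  have hPvw : 0 < P (v, w) := hpos
  have hQv : 0 < pr p V v := lt_of_lt_of_le hPvw (hPQ v w)
  have hlogeq : Real.logb 2 (pr p V v) = Real.logb 2 (P (v, w)) := by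
    rcases mul_eq_zero.1 hz with h0 | h0
    · exact absurd h0 hPvw.ne'
    · linarith [sub_eq_zero.1 h0]
  have : Real.log (pr p V v) = Real.log (P (v, w)) := by
    have h2 : Real.log 2 ≠ 0 := (Real.log_pos one_lt_two).ne'
    rw [Real.logb, Real.logb, div_left_inj' h2] at hlogeq
    exact hlogeq
  have := Real.log_injOn_pos (Set.mem_Ioi.2 hQv) (Set.mem_Ioi.2 hPvw) this
  exact this.symm

lemma indep_of_ent_add [Fintype S] [Fintype T] (p : Ω → ℝ) (hp : ∀ x, 0 ≤ p x)
    (hsum : ∑ ω, p ω = 1) (Y : Ω → S) (Z : Ω → T)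
    (h : ent p (fun ω => (Y ω, Z ω)) = ent p Y + ent p Z) :
    ∀ y z, pr p (fun ω => (Y ω, Z ω)) (y, z) = pr p Y y * pr p Z z := by
  classical
  set P : S × T → ℝ := pr p (fun ω => (Y ω, Z ω)) with hP
  set G : S × T → ℝ := fun q => pr p Y q.1 * pr p Z q.2 with hG
  have hPn : ∀ q, 0 ≤ P q := fun q => pr_nonneg p hp _ q
  have hYm : ∀ y, pr p Y y = ∑ z, P (y, z) := fun y => pr_fst p Y Z y
  have hZm : ∀ z, pr p Z z = ∑ y, P (y, z) := by
    intro z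
    have := pr_fst p Z Y z
    rw [this]
    refine Finset.sum_congr rfl fun y _ => ?_
    exact pr_congr p fun ω => by simp [Prod.ext_iff]; tauto
  have hPle1 : ∀ y z, P (y, z) ≤ pr p Y y := fun y z => by
    rw [hYm y]; exact Finset.single_le_sum (fun z' _ => hPn (y, z')) (Finset.mem_univ z)
  have hPle2 : ∀ y z, P (y, z) ≤ pr p Z z := fun y z => by
    rw [hZm z]; exact Finset.single_le_sum (fun y' _ => hPn (y', z)) (Finset.mem_univ y)
  have hfs : ∑ q : S × T, P q = 1 := by
    rw [show ∑ q : S × T, P q = ∑ ω, p ω from sum_pr p _, hsum]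
  have hgs : ∑ q : S × T, G q = 1 := by
    rw [Fintype.sum_prod_type]
    simp only [hG]
    rw [show ∑ y : S, ∑ z : T, pr p Y y * pr p Z z
        = (∑ y : S, pr p Y y) * (∑ z : T, pr p Z z) by rw [Finset.sum_mul_sum]]
    rw [sum_pr p Y, sum_pr p Z, hsum]; norm_num
  have hgpos : ∀ q, 0 < P q → 0 < G q := by
    intro q hq
    exact mul_pos (lt_of_lt_of_le hq (hPle1 q.1 q.2)) (lt_of_lt_of_le hq (hPle2 q.1 q.2))
  have heq : ∑ q : S × T, P q * Real.log (P q) = ∑ q : S × T, P q * Real.log (G q) := by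
    -- from h, converting logb to log
    have h1 : ent p (fun ω => (Y ω, Z ω)) = - ∑ q : S × T, P q * Real.logb 2 (P q) :=
      ent_eq_univ p _
    have h2 : ent p Y = - ∑ q : S × T, P q * Real.logb 2 (pr p Y q.1) := by
      rw [ent_eq_univ p Y]
      congr 1
      rw [Fintype.sum_prod_type]
      refine Finset.sum_congr rfl fun y _ => ?_
      nth_rewrite 1 [hYm y]
      rw [Finset.sum_mul]
    have h3 : ent p Z = - ∑ q : S × T, P q * Real.logb 2 (pr p Z q.2) := by
      rw [ent_eq_univ p Z]
      congr 1
      rw [Fintype.sum_prod_type, Finset.sum_comm]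
      refine Finset.sum_congr rfl fun z _ => ?_
      nth_rewrite 1 [hZm z]
      rw [Finset.sum_mul]
    rw [h1, h2, h3] at h
    have hlogb : ∑ q : S × T, P q * Real.logb 2 (P q)
        = ∑ q : S × T, (P q * Real.logb 2 (pr p Y q.1) + P q * Real.logb 2 (pr p Z q.2)) := by
      rw [Finset.sum_add_distrib]; linarith
    have hG2 : ∀ q : S × T, P q * Real.logb 2 (G q)
        = P q * Real.logb 2 (pr p Y q.1) + P q * Real.logb 2 (pr p Z q.2) := by
      intro q
      rcases eq_or_lt_of_le (hPn q) with hq | hq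
      · rw [← hq]; ring
      · have h1' : 0 < pr p Y q.1 := lt_of_lt_of_le hq (hPle1 q.1 q.2)
        have h2' : 0 < pr p Z q.2 := lt_of_lt_of_le hq (hPle2 q.1 q.2)
        rw [hG]
        rw [Real.logb, Real.log_mul h1'.ne' h2'.ne']
        simp [Real.logb]
        ring
    have hfin : ∑ q : S × T, P q * Real.logb 2 (P q) = ∑ q : S × T, P q * Real.logb 2 (G q) := by
      rw [hlogb]
      exact (Finset.sum_congr rfl fun q _ => (hG2 q)).symm
    -- multiply by log 2
    have hl2 : Real.log 2 ≠ 0 := (Real.log_pos one_lt_two).ne'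
    have expand : ∀ (F : S × T → ℝ), ∑ q : S × T, P q * Real.logb 2 (F q)
        = (∑ q : S × T, P q * Real.log (F q)) / Real.log 2 := by
      intro F
      rw [Finset.sum_div]
      exact Finset.sum_congr rfl fun q _ => by rw [Real.logb]; ring
    rw [expand (fun q => P q), expand G] at hfin
    field_simp at hfin
    exact hfin
  have := gibbs P G hPn (fun q => mul_nonneg (pr_nonneg p hp Y q.1) (pr_nonneg p hp Z q.2))
    hfs hgs hgpos heq
  intro y z
  exact this (y, z)

end core

section enc
variable (m : Fin 4 → ℕ)

lemma inj1 (j : Fin 4) :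
    Function.Injective (fun f : (i : ({j} : Finset (Fin 4))) → Fin (m i.1) =>
      f ⟨j, Finset.mem_singleton_self j⟩) := by
  intro f g h
  funext i
  obtain ⟨v, hv⟩ := i
  obtain rfl := Finset.mem_singleton.mp hv
  exact h

lemma inj2 (i₀ i₁ : Fin 4) :
    Function.Injective (fun f : (i : ({i₀, i₁} : Finset (Fin 4))) → Fin (m i.1) =>
      (f ⟨i₀, by simp⟩, f ⟨i₁, by simp⟩)) := by
  intro f g h
  have h0 := congrArg Prod.fst h
  have h1 := congrArg Prod.snd h
  funext i
  obtain ⟨v, hv⟩ := i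
  rcases Finset.mem_insert.mp hv with rfl | hv'
  · exact h0
  · obtain rfl := Finset.mem_singleton.mp hv'
    exact h1

lemma inj3 (i₀ i₁ i₂ : Fin 4) :
    Function.Injective (fun f : (i : ({i₀, i₁, i₂} : Finset (Fin 4))) → Fin (m i.1) =>
      (f ⟨i₀, by simp⟩, (f ⟨i₁, by simp⟩, f ⟨i₂, by simp⟩))) := by
  intro f g h
  have h0 := congrArg Prod.fst h
  have h1 := congrArg (fun t => t.2.1) h
  have h2 := congrArg (fun t => t.2.2) h
  funext i
  obtain ⟨v, hv⟩ := i
  rcases Finset.mem_insert.mp hv with rfl | hv'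
  · exact h0
  · rcases Finset.mem_insert.mp hv' with rfl | hv''
    · exact h1
    · obtain rfl := Finset.mem_singleton.mp hv''
      exact h2

lemma inj4a :
    Function.Injective (fun f : (i : ({0, 1, 2, 3} : Finset (Fin 4))) → Fin (m i.1) =>
      ((f ⟨0, by decide⟩, f ⟨1, by decide⟩), (f ⟨2, by decide⟩, f ⟨3, by decide⟩))) := by
  intro f g h
  have h0 := congrArg (fun t => t.1.1) h
  have h1 := congrArg (fun t => t.1.2) h
  have h2 := congrArg (fun t => t.2.1) h
  have h3 := congrArg (fun t => t.2.2) h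
  funext i
  obtain ⟨v, hv⟩ := i
  rcases Finset.mem_insert.mp hv with rfl | hv'
  · exact h0
  · rcases Finset.mem_insert.mp hv' with rfl | hv''
    · exact h1
    · rcases Finset.mem_insert.mp hv'' with rfl | hv'''
      · exact h2
      · obtain rfl := Finset.mem_singleton.mp hv'''
        exact h3

lemma inj4b :
    Function.Injective (fun f : (i : ({0, 1, 2, 3} : Finset (Fin 4))) → Fin (m i.1) =>
      ((f ⟨0, by decide⟩, (f ⟨2, by decide⟩, f ⟨3, by decide⟩)), f ⟨1, by decide⟩)) := by
  intro f g h
  have h0 := congrArg (fun t => t.1.1) h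
  have h1 := congrArg (fun t => t.2) h
  have h2 := congrArg (fun t => t.1.2.1) h
  have h3 := congrArg (fun t => t.1.2.2) h
  funext i
  obtain ⟨v, hv⟩ := i
  rcases Finset.mem_insert.mp hv with rfl | hv'
  · exact h0
  · rcases Finset.mem_insert.mp hv' with rfl | hv''
    · exact h1
    · rcases Finset.mem_insert.mp hv'' with rfl | hv'''
      · exact h2
      · obtain rfl := Finset.mem_singleton.mp hv'''
        exact h3

end enc

lemma rkU_eval (k n : ℕ) (B A : Finset (Fin 4)) (h : (A ∩ B).card = n) :
    rkU k B A = min (k : ℝ) (n : ℝ) := by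
  unfold rkU
  rw [h]


lemma ent_eq_of_inv {Ω : Type} [Fintype Ω] {S : Type} [DecidableEq S] {T : Type} [DecidableEq T]
    (p : Ω → ℝ) (Y : Ω → S) (Z : Ω → T) (e : S → T) (he : Function.Injective e)
    (hYZ : ∀ ω, Z ω = e (Y ω)) : ent p Z = ent p Y := by
  have hZ : Z = fun ω => e (Y ω) := funext hYZ
  rw [hZ]
  exact ent_comp_inj p Y e he

/-- Key structural step of Theorem 5: if the entropy function of a random
vector (X₁,X₂,X₃,X₄) equals a·r(U^{123}_{2,3}) + b·r(U^{124}_{2,3}), then X₃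
and X₄ are each uniformly distributed on their supports. -/
theorem uniform_marginals_on_face_U123_23_U124_23 (a b : ℝ)
    (m : Fin 4 → ℕ) (p : (∀ i, Fin (m i)) → ℝ)
    (hp : ∀ x, 0 ≤ p x) (hsum : (∑ x, p x) = 1)
    (hent : ∀ A : Finset (Fin 4),
      ent p (fun x (i : A) => x i.1) =
        a * rkU 2 ({0,1,2} : Finset (Fin 4)) A +
        b * rkU 2 ({0,1,3} : Finset (Fin 4)) A) :
    (∀ s s' : Fin (m 2), 0 < pr p (fun x => x 2) s → 0 < pr p (fun x => x 2) s' →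
      pr p (fun x => x 2) s = pr p (fun x => x 2) s') ∧
    (∀ s s' : Fin (m 3), 0 < pr p (fun x => x 3) s → 0 < pr p (fun x => x 3) s' →
      pr p (fun x => x 3) s = pr p (fun x => x 3) s') := by
  classical
  -- entropy values of various recodings
  have v0 : ent p (fun x : ∀ i, Fin (m i) => x 0) = a + b := by
    calc ent p (fun x : ∀ i, Fin (m i) => x 0)
        = ent p (fun x (i : ({0} : Finset (Fin 4))) => x i.1) :=
          ent_eq_of_inv p (fun x (i : (({0}) : Finset (Fin 4))) => x i.1) _ _ (inj1 m 0) (fun _ => rfl)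
      _ = a * rkU 2 {0,1,2} {0} + b * rkU 2 {0,1,3} {0} := hent {0}
      _ = a + b := by
          rw [rkU_eval 2 1 _ _ (by decide), rkU_eval 2 1 _ _ (by decide)]; norm_num
  have v1 : ent p (fun x : ∀ i, Fin (m i) => x 1) = a + b := by
    calc ent p (fun x : ∀ i, Fin (m i) => x 1)
        = ent p (fun x (i : ({1} : Finset (Fin 4))) => x i.1) :=
          ent_eq_of_inv p (fun x (i : (({1}) : Finset (Fin 4))) => x i.1) _ _ (inj1 m 1) (fun _ => rfl)
      _ = a * rkU 2 {0,1,2} {1} + b * rkU 2 {0,1,3} {1} := hent {1}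
      _ = a + b := by
          rw [rkU_eval 2 1 _ _ (by decide), rkU_eval 2 1 _ _ (by decide)]; norm_num
  have v2 : ent p (fun x : ∀ i, Fin (m i) => x 2) = a := by
    calc ent p (fun x : ∀ i, Fin (m i) => x 2)
        = ent p (fun x (i : ({2} : Finset (Fin 4))) => x i.1) :=
          ent_eq_of_inv p (fun x (i : (({2}) : Finset (Fin 4))) => x i.1) _ _ (inj1 m 2) (fun _ => rfl)
      _ = a * rkU 2 {0,1,2} {2} + b * rkU 2 {0,1,3} {2} := hent {2}
      _ = a := by
          rw [rkU_eval 2 1 _ _ (by decide), rkU_eval 2 0 _ _ (by decide)]; norm_num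
  have v3 : ent p (fun x : ∀ i, Fin (m i) => x 3) = b := by
    calc ent p (fun x : ∀ i, Fin (m i) => x 3)
        = ent p (fun x (i : ({3} : Finset (Fin 4))) => x i.1) :=
          ent_eq_of_inv p (fun x (i : (({3}) : Finset (Fin 4))) => x i.1) _ _ (inj1 m 3) (fun _ => rfl)
      _ = a * rkU 2 {0,1,2} {3} + b * rkU 2 {0,1,3} {3} := hent {3}
      _ = b := by
          rw [rkU_eval 2 0 _ _ (by decide), rkU_eval 2 1 _ _ (by decide)]; norm_num
  have v01 : ent p (fun x : ∀ i, Fin (m i) => (x 0, x 1)) = 2*a + 2*b := by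
    calc ent p (fun x : ∀ i, Fin (m i) => (x 0, x 1))
        = ent p (fun x (i : ({0,1} : Finset (Fin 4))) => x i.1) :=
          ent_eq_of_inv p (fun x (i : (({0,1}) : Finset (Fin 4))) => x i.1) _ _ (inj2 m 0 1) (fun _ => rfl)
      _ = a * rkU 2 {0,1,2} {0,1} + b * rkU 2 {0,1,3} {0,1} := hent {0,1}
      _ = 2*a + 2*b := by
          rw [rkU_eval 2 2 _ _ (by decide), rkU_eval 2 2 _ _ (by decide)]; norm_num; ring
  have v23 : ent p (fun x : ∀ i, Fin (m i) => (x 2, x 3)) = a + b := by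
    calc ent p (fun x : ∀ i, Fin (m i) => (x 2, x 3))
        = ent p (fun x (i : ({2,3} : Finset (Fin 4))) => x i.1) :=
          ent_eq_of_inv p (fun x (i : (({2,3}) : Finset (Fin 4))) => x i.1) _ _ (inj2 m 2 3) (fun _ => rfl)
      _ = a * rkU 2 {0,1,2} {2,3} + b * rkU 2 {0,1,3} {2,3} := hent {2,3}
      _ = a + b := by
          rw [rkU_eval 2 1 _ _ (by decide), rkU_eval 2 1 _ _ (by decide)]; norm_num
  have v023 : ent p (fun x : ∀ i, Fin (m i) => (x 0, (x 2, x 3))) = 2*a + 2*b := by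
    calc ent p (fun x : ∀ i, Fin (m i) => (x 0, (x 2, x 3)))
        = ent p (fun x (i : ({0,2,3} : Finset (Fin 4))) => x i.1) :=
          ent_eq_of_inv p (fun x (i : (({0,2,3}) : Finset (Fin 4))) => x i.1) _ _ (inj3 m 0 2 3) (fun _ => rfl)
      _ = a * rkU 2 {0,1,2} {0,2,3} + b * rkU 2 {0,1,3} {0,2,3} := hent {0,2,3}
      _ = 2*a + 2*b := by
          rw [rkU_eval 2 2 _ _ (by decide), rkU_eval 2 2 _ _ (by decide)]; norm_num; ring
  have v123 : ent p (fun x : ∀ i, Fin (m i) => (x 1, (x 2, x 3))) = 2*a + 2*b := by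
    calc ent p (fun x : ∀ i, Fin (m i) => (x 1, (x 2, x 3)))
        = ent p (fun x (i : ({1,2,3} : Finset (Fin 4))) => x i.1) :=
          ent_eq_of_inv p (fun x (i : (({1,2,3}) : Finset (Fin 4))) => x i.1) _ _ (inj3 m 1 2 3) (fun _ => rfl)
      _ = a * rkU 2 {0,1,2} {1,2,3} + b * rkU 2 {0,1,3} {1,2,3} := hent {1,2,3}
      _ = 2*a + 2*b := by
          rw [rkU_eval 2 2 _ _ (by decide), rkU_eval 2 2 _ _ (by decide)]; norm_num; ring
  have vU1 : ent p (fun x : ∀ i, Fin (m i) => ((x 0, x 1), (x 2, x 3))) = 2*a + 2*b := by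
    calc ent p (fun x : ∀ i, Fin (m i) => ((x 0, x 1), (x 2, x 3)))
        = ent p (fun x (i : ({0,1,2,3} : Finset (Fin 4))) => x i.1) :=
          ent_eq_of_inv p (fun x (i : (({0,1,2,3}) : Finset (Fin 4))) => x i.1) _ _ (inj4a m) (fun _ => rfl)
      _ = a * rkU 2 {0,1,2} {0,1,2,3} + b * rkU 2 {0,1,3} {0,1,2,3} := hent {0,1,2,3}
      _ = 2*a + 2*b := by
          rw [rkU_eval 2 3 _ _ (by decide), rkU_eval 2 3 _ _ (by decide)]; norm_num; ring
  have vU2 : ent p (fun x : ∀ i, Fin (m i) => ((x 0, (x 2, x 3)), x 1)) = 2*a + 2*b := by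
    calc ent p (fun x : ∀ i, Fin (m i) => ((x 0, (x 2, x 3)), x 1))
        = ent p (fun x (i : ({0,1,2,3} : Finset (Fin 4))) => x i.1) :=
          ent_eq_of_inv p (fun x (i : (({0,1,2,3}) : Finset (Fin 4))) => x i.1) _ _ (inj4b m) (fun _ => rfl)
      _ = a * rkU 2 {0,1,2} {0,1,2,3} + b * rkU 2 {0,1,3} {0,1,2,3} := hent {0,1,2,3}
      _ = 2*a + 2*b := by
          rw [rkU_eval 2 3 _ _ (by decide), rkU_eval 2 3 _ _ (by decide)]; norm_num; ring
  -- structural facts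
  have F1 := cond_det p hp (fun x : ∀ i, Fin (m i) => (x 0, x 1))
    (fun x : ∀ i, Fin (m i) => (x 2, x 3))
    (show ent p (fun x : ∀ i, Fin (m i) => ((x 0, x 1), (x 2, x 3)))
        = ent p (fun x : ∀ i, Fin (m i) => (x 0, x 1)) by rw [vU1, v01])
  have F2 := cond_det p hp (fun x : ∀ i, Fin (m i) => (x 0, (x 2, x 3)))
    (fun x : ∀ i, Fin (m i) => x 1)
    (show ent p (fun x : ∀ i, Fin (m i) => ((x 0, (x 2, x 3)), x 1))
        = ent p (fun x : ∀ i, Fin (m i) => (x 0, (x 2, x 3))) by rw [vU2, v023])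
  have F3 := indep_of_ent_add p hp hsum (fun x : ∀ i, Fin (m i) => x 0)
    (fun x : ∀ i, Fin (m i) => x 1)
    (show ent p (fun x : ∀ i, Fin (m i) => (x 0, x 1))
        = ent p (fun x : ∀ i, Fin (m i) => x 0) + ent p (fun x : ∀ i, Fin (m i) => x 1) by
      rw [v01, v0, v1]; ring)
  have F4 := indep_of_ent_add p hp hsum (fun x : ∀ i, Fin (m i) => x 2)
    (fun x : ∀ i, Fin (m i) => x 3)
    (show ent p (fun x : ∀ i, Fin (m i) => (x 2, x 3))
        = ent p (fun x : ∀ i, Fin (m i) => x 2) + ent p (fun x : ∀ i, Fin (m i) => x 3) by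
      rw [v23, v2, v3])
  have F5 := indep_of_ent_add p hp hsum (fun x : ∀ i, Fin (m i) => x 0)
    (fun x : ∀ i, Fin (m i) => (x 2, x 3))
    (show ent p (fun x : ∀ i, Fin (m i) => (x 0, (x 2, x 3)))
        = ent p (fun x : ∀ i, Fin (m i) => x 0) + ent p (fun x : ∀ i, Fin (m i) => (x 2, x 3)) by
      rw [v023, v0, v23]; ring)
  have F6 := indep_of_ent_add p hp hsum (fun x : ∀ i, Fin (m i) => x 1)
    (fun x : ∀ i, Fin (m i) => (x 2, x 3))
    (show ent p (fun x : ∀ i, Fin (m i) => (x 1, (x 2, x 3)))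
        = ent p (fun x : ∀ i, Fin (m i) => x 1) + ent p (fun x : ∀ i, Fin (m i) => (x 2, x 3)) by
      rw [v123, v1, v23]; ring)
  -- key pointwise identity
  have KEY : ∀ ω : (∀ i, Fin (m i)), 0 < p ω →
      pr p (fun x => x 1) (ω 1) = pr p (fun x => x 2) (ω 2) * pr p (fun x => x 3) (ω 3) := by
    intro ω hω
    have hVW : 0 < pr p (fun x : ∀ i, Fin (m i) => ((x 0, x 1), (x 2, x 3)))
        ((ω 0, ω 1), (ω 2, ω 3)) :=
      lt_of_lt_of_le hω (single_le_pr p hp (fun x : ∀ i, Fin (m i) => ((x 0, x 1), (x 2, x 3))) ω)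
    have e1 : pr p (fun x : ∀ i, Fin (m i) => ((x 0, x 1), (x 2, x 3))) ((ω 0, ω 1), (ω 2, ω 3))
        = pr p (fun x : ∀ i, Fin (m i) => (x 0, x 1)) (ω 0, ω 1) := F1 _ _ hVW
    have e2 : pr p (fun x : ∀ i, Fin (m i) => ((x 0, x 1), (x 2, x 3))) ((ω 0, ω 1), (ω 2, ω 3))
        = pr p (fun x : ∀ i, Fin (m i) => ((x 0, (x 2, x 3)), x 1)) ((ω 0, (ω 2, ω 3)), ω 1) :=
      pr_congr p fun x => by simp only [Prod.ext_iff]; tauto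
    have hVW' : 0 < pr p (fun x : ∀ i, Fin (m i) => ((x 0, (x 2, x 3)), x 1))
        ((ω 0, (ω 2, ω 3)), ω 1) := e2 ▸ hVW
    have e3 : pr p (fun x : ∀ i, Fin (m i) => ((x 0, (x 2, x 3)), x 1)) ((ω 0, (ω 2, ω 3)), ω 1)
        = pr p (fun x : ∀ i, Fin (m i) => (x 0, (x 2, x 3))) (ω 0, (ω 2, ω 3)) := F2 _ _ hVW'
    have e4 : pr p (fun x : ∀ i, Fin (m i) => (x 0, x 1)) (ω 0, ω 1)
        = pr p (fun x => x 0) (ω 0) * pr p (fun x => x 1) (ω 1) := F3 _ _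
    have e5 : pr p (fun x : ∀ i, Fin (m i) => (x 0, (x 2, x 3))) (ω 0, (ω 2, ω 3))
        = pr p (fun x => x 0) (ω 0) * pr p (fun x : ∀ i, Fin (m i) => (x 2, x 3)) (ω 2, ω 3) :=
      F5 _ _
    have e6 : pr p (fun x : ∀ i, Fin (m i) => (x 2, x 3)) (ω 2, ω 3)
        = pr p (fun x => x 2) (ω 2) * pr p (fun x => x 3) (ω 3) := F4 _ _
    have hq0 : 0 < pr p (fun x : ∀ i, Fin (m i) => x 0) (ω 0) :=
      lt_of_lt_of_le hω (single_le_pr p hp (fun x : ∀ i, Fin (m i) => x 0) ω)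
    have hfin : pr p (fun x : ∀ i, Fin (m i) => x 0) (ω 0) * pr p (fun x => x 1) (ω 1)
        = pr p (fun x : ∀ i, Fin (m i) => x 0) (ω 0)
          * (pr p (fun x => x 2) (ω 2) * pr p (fun x => x 3) (ω 3)) := by
      rw [← e4, ← e1, e2, e3, e5, e6]
    exact mul_left_cancel₀ hq0.ne' hfin
  -- a positive-probability sample point
  obtain ⟨ω₀, hω₀⟩ : ∃ ω, 0 < p ω := by
    by_contra hc
    push_neg at hc
    have hz : ∑ x, p x = 0 :=
      Finset.sum_eq_zero fun x _ => le_antisymm (hc x) (hp x)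
    rw [hsum] at hz
    norm_num at hz
  have hq1 : 0 < pr p (fun x : ∀ i, Fin (m i) => x 1) (ω₀ 1) :=
    lt_of_lt_of_le hω₀ (single_le_pr p hp (fun x : ∀ i, Fin (m i) => x 1) ω₀)
  have hq2 : 0 < pr p (fun x : ∀ i, Fin (m i) => x 2) (ω₀ 2) :=
    lt_of_lt_of_le hω₀ (single_le_pr p hp (fun x : ∀ i, Fin (m i) => x 2) ω₀)
  have hq3 : 0 < pr p (fun x : ∀ i, Fin (m i) => x 3) (ω₀ 3) :=
    lt_of_lt_of_le hω₀ (single_le_pr p hp (fun x : ∀ i, Fin (m i) => x 3) ω₀)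
  constructor
  · -- coordinate 2
    have rel : ∀ s : Fin (m 2), 0 < pr p (fun x => x 2) s →
        pr p (fun x => x 1) (ω₀ 1) = pr p (fun x => x 2) s * pr p (fun x => x 3) (ω₀ 3) := by
      intro s hs
      have h6 : pr p (fun x : ∀ i, Fin (m i) => (x 1, (x 2, x 3))) (ω₀ 1, (s, ω₀ 3))
          = pr p (fun x => x 1) (ω₀ 1)
            * pr p (fun x : ∀ i, Fin (m i) => (x 2, x 3)) (s, ω₀ 3) := F6 _ _
      have h4 : pr p (fun x : ∀ i, Fin (m i) => (x 2, x 3)) (s, ω₀ 3)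
          = pr p (fun x => x 2) s * pr p (fun x => x 3) (ω₀ 3) := F4 _ _
      have hpos : 0 < pr p (fun x : ∀ i, Fin (m i) => (x 1, (x 2, x 3))) (ω₀ 1, (s, ω₀ 3)) := by
        rw [h6, h4]
        exact mul_pos hq1 (mul_pos hs hq3)
      obtain ⟨ω, hpω, hωeq⟩ := pr_pos_elim p hp _ _ hpos
      obtain ⟨h1', h2', h3'⟩ : ω 1 = ω₀ 1 ∧ ω 2 = s ∧ ω 3 = ω₀ 3 := by
        simpa [Prod.ext_iff] using hωeq
      have hk := KEY ω hpω
      rw [h1', h2', h3'] at hk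
      exact hk
    intro s s' hs hs'
    have r := rel s hs
    have r' := rel s' hs'
    exact mul_right_cancel₀ hq3.ne' (r.symm.trans r')
  · -- coordinate 3
    have rel : ∀ t : Fin (m 3), 0 < pr p (fun x => x 3) t →
        pr p (fun x => x 1) (ω₀ 1) = pr p (fun x => x 2) (ω₀ 2) * pr p (fun x => x 3) t := by
      intro t ht
      have h6 : pr p (fun x : ∀ i, Fin (m i) => (x 1, (x 2, x 3))) (ω₀ 1, (ω₀ 2, t))
          = pr p (fun x => x 1) (ω₀ 1)
            * pr p (fun x : ∀ i, Fin (m i) => (x 2, x 3)) (ω₀ 2, t) := F6 _ _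
      have h4 : pr p (fun x : ∀ i, Fin (m i) => (x 2, x 3)) (ω₀ 2, t)
          = pr p (fun x => x 2) (ω₀ 2) * pr p (fun x => x 3) t := F4 _ _
      have hpos : 0 < pr p (fun x : ∀ i, Fin (m i) => (x 1, (x 2, x 3))) (ω₀ 1, (ω₀ 2, t)) := by
        rw [h6, h4]
        exact mul_pos hq1 (mul_pos hq2 ht)
      obtain ⟨ω, hpω, hωeq⟩ := pr_pos_elim p hp _ _ hpos
      obtain ⟨h1', h2', h3'⟩ : ω 1 = ω₀ 1 ∧ ω 2 = ω₀ 2 ∧ ω 3 = t := by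
        simpa [Prod.ext_iff] using hωeq
      have hk := KEY ω hpω
      rw [h1', h2', h3'] at hk
      exact hk
    intro s s' hs hs'
    have r := rel s hs
    have r' := rel s' hs'
    have := r.symm.trans r'
    exact mul_left_cancel₀ hq2.ne' this
end

section
/- Let X₁, X₂ be finite random variables and X₃ = f(X₁,X₂) a function of them such that X₂ and X₃ are independent. Consider the bipartite graph on supp(X₁) ∪ supp(X₂) with an edge (x₁,x₂) iff p(x₁,x₂) > 0, edges colored by the value f(x₁,x₂). If |supp(X₃)| = k, then every vertex x₂ ∈ supp(X₂) is incident to edges of all k colors; consequently each connected component of the graph contains at least k vertices from supp(X₁). -/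
open Finset

/-- The bipartite graph on V₁ ⊕ V₂ determined by the edge relation E. -/
def bipGraph {V₁ V₂ : Type} (E : V₁ → V₂ → Prop) : SimpleGraph (V₁ ⊕ V₂) :=
  SimpleGraph.fromRel (fun a b => ∃ u v, a = Sum.inl u ∧ b = Sum.inr v ∧ E u v)

/-- Counting step in the proof of Theorem 4: if X₃ = f(X₁,X₂) is independent of
X₂ and |supp(X₃)| = k, then in the bipartite support graph of (X₁,X₂), every
vertex x₂ ∈ supp(X₂) is incident to edges of all k colors (values of f), and
consequently the connected component of any x₂ ∈ supp(X₂) contains at least k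
vertices from supp(X₁). -/
theorem all_colors_at_each_vertex
    (m₁ m₂ m₃ k : ℕ) (p : Fin m₁ × Fin m₂ → ℝ) (f : Fin m₁ → Fin m₂ → Fin m₃)
    (hp : ∀ x, 0 ≤ p x) (hsum : (∑ x, p x) = 1)
    (hind : ∀ (y : Fin m₂) (c : Fin m₃),
      (∑ x, if f x y = c then p (x, y) else 0) =
        (∑ x, p (x, y)) * (∑ x, ∑ y', if f x y' = c then p (x, y') else 0))
    (hk : (Finset.univ.filter
      fun c => 0 < ∑ x, ∑ y, if f x y = c then p (x, y) else 0).card = k) :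
    (∀ y : Fin m₂, 0 < (∑ x, p (x, y)) →
      ∀ c : Fin m₃, 0 < (∑ x, ∑ y', if f x y' = c then p (x, y') else 0) →
        ∃ x : Fin m₁, 0 < p (x, y) ∧ f x y = c) ∧
    (∀ y : Fin m₂, 0 < (∑ x, p (x, y)) →
      k ≤ {x : Fin m₁ |
        (bipGraph fun x' y' => 0 < p (x', y')).Reachable
          (Sum.inl x) (Sum.inr y)}.ncard) := by
  have h1 : ∀ y : Fin m₂, 0 < (∑ x, p (x, y)) →
      ∀ c : Fin m₃, 0 < (∑ x, ∑ y', if f x y' = c then p (x, y') else 0) →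
        ∃ x : Fin m₁, 0 < p (x, y) ∧ f x y = c := by
    intro y hy c hc
    have hpos : 0 < ∑ x, if f x y = c then p (x, y) else 0 := by
      rw [hind y c]; exact mul_pos hy hc
    have : (∑ _x : Fin m₁, (0 : ℝ)) < ∑ x, if f x y = c then p (x, y) else 0 := by
      simpa using hpos
    obtain ⟨x, hx⟩ := Finset.exists_lt_of_sum_lt this
    by_cases h : f x y = c
    · exact ⟨x, by simpa [h] using hx, h⟩
    · simp [h] at hx
  refine ⟨h1, ?_⟩
  intro y hy
  choose g hg1 hg2 using h1 y hy
  -- a default element of Fin m₁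
  have hm : 0 < m₁ := by
    rcases Nat.eq_zero_or_pos m₁ with h | h
    · exfalso; subst h; simp at hy
    · exact h
  haveI : NeZero m₁ := ⟨hm.ne'⟩
  set P : Fin m₃ → Prop := fun c => 0 < ∑ x, ∑ y', if f x y' = c then p (x, y') else 0 with hP
  set G : Fin m₃ → Fin m₁ := fun c => if h : P c then g c h else 0 with hG
  set T : Set (Fin m₁) := {x : Fin m₁ |
      (bipGraph fun x' y' => 0 < p (x', y')).Reachable (Sum.inl x) (Sum.inr y)} with hT
  set S : Finset (Fin m₃) := Finset.univ.filter P with hS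
  have hsub : G '' ↑S ⊆ T := by
    rintro x ⟨c, hc, rfl⟩
    have hcP : P c := (Finset.mem_filter.mp hc).2
    have hx : 0 < p (g c hcP, y) := hg1 c hcP
    have hadj : (bipGraph fun x' y' => 0 < p (x', y')).Adj
        (Sum.inl (g c hcP)) (Sum.inr y) := by
      constructor
      · simp
      · exact Or.inl ⟨g c hcP, y, rfl, rfl, hx⟩
    simp only [hT, Set.mem_setOf_eq, hG, dif_pos hcP]
    exact hadj.reachable
  have hinj : Set.InjOn G ↑S := by
    intro c₁ hc₁ c₂ hc₂ h
    have h₁ : P c₁ := (Finset.mem_filter.mp hc₁).2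
    have h₂ : P c₂ := (Finset.mem_filter.mp hc₂).2
    have e₁ : f (G c₁) y = c₁ := by simp only [hG, dif_pos h₁]; exact hg2 c₁ h₁
    have e₂ : f (G c₂) y = c₂ := by simp only [hG, dif_pos h₂]; exact hg2 c₂ h₂
    rw [← e₁, ← e₂, h]
  calc k = S.card := hk.symm
    _ = (↑S : Set (Fin m₃)).ncard := (Set.ncard_coe_finset S).symm
    _ = (G '' ↑S).ncard := (Set.ncard_image_of_injOn hinj).symm
    _ ≤ T.ncard := Set.ncard_le_ncard hsub T.toFinite
end

section
/- Let k be a positive integer and (α(x) : x ∈ S) a partition of k into positive integers indexed by a finite set S. Let X₁ be uniform on {0,...,k−1}, X₃ independent of X₁ and uniform on {0,...,k−1}, X₄ = X₁ + X₃ mod k, and X₂ = φ(X₁) where φ maps a partition block A(x) of {0,...,k−1} with |A(x)| = α(x) to x. Then the entropy function of (X₁,X₂,X₃,X₄) equals a·r₁ + b·r₂ where r₁, r₂ are the rank functions of W^{12}_2 and U^{134}_{2,3}, a = H(α(x)/k : x ∈ S), and b = log k − a. -/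
open Finset

/-- Rank function of the rank-2 wheel matroid W^{12}₂ on N₄ = {0,1,2,3} in
which 0 and 1 are parallel: r(A) = min(2, number of parallel classes
{0,1},{2},{3} meeting A). -/
noncomputable def rW12 (A : Finset (Fin 4)) : ℝ :=
  min (2 : ℝ)
    (((if (A ∩ ({0,1} : Finset (Fin 4))).Nonempty then 1 else 0) +
      (if (2 : Fin 4) ∈ A then 1 else 0) +
      (if (3 : Fin 4) ∈ A then 1 else 0) : ℝ))

/-! ### Auxiliary lemmas -/

lemma pr_const {Ω : Type} [Fintype Ω] {S : Type} [DecidableEq S]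
    (c : ℝ) (Y : Ω → S) (s : S) :
    pr (fun _ => c) Y s = ((univ.filter fun ω => Y ω = s).card : ℝ) * c := by
  rw [pr, ← Finset.sum_filter, Finset.sum_const, nsmul_eq_mul]

lemma ent_const_fiber {Ω : Type} [Fintype Ω] {S : Type} [DecidableEq S]
    (n m : ℕ) (hm : 0 < m) (hn0 : 0 < n) (hn : Fintype.card Ω = n) (Y : Ω → S)
    (hfib : ∀ s ∈ univ.image Y, (univ.filter fun ω => Y ω = s).card = m) :
    ent (fun _ => (n:ℝ)⁻¹) Y = Real.logb 2 n - Real.logb 2 m := by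
  have hcard : (univ.image Y).card * m = n := by
    rw [← hn, ← Finset.card_univ,
      Finset.card_eq_sum_card_fiberwise (fun x _ => Finset.mem_image_of_mem Y (mem_univ x)),
      Finset.sum_congr rfl hfib, Finset.sum_const, smul_eq_mul]
  have hmn : (m : ℝ) / n ≠ 0 := by positivity
  have hcardR : ((univ.image Y).card : ℝ) = (n : ℝ) / m := by
    field_simp
    exact_mod_cast hcard
  rw [ent, Finset.sum_congr rfl (fun s hs => by rw [pr_const, hfib s hs]),
    Finset.sum_const, nsmul_eq_mul, hcardR]
  rw [show (m:ℝ) * (n:ℝ)⁻¹ = (m:ℝ)/(n:ℝ) from rfl, Real.logb_div (by positivity) (by positivity)]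
  field_simp
  ring

lemma ent_subsingleton {Ω : Type} [Fintype Ω] {S : Type} [DecidableEq S]
    (n : ℕ) (hn0 : 0 < n) (hn : Fintype.card Ω = n) (Y : Ω → S)
    (hY : ∀ ω ω', Y ω = Y ω') :
    ent (fun _ => (n:ℝ)⁻¹) Y = 0 := by
  rw [show (0:ℝ) = Real.logb 2 n - Real.logb 2 n from by ring]
  refine ent_const_fiber n n hn0 hn0 hn Y fun s hs => ?_
  obtain ⟨ω₀, -, rfl⟩ := Finset.mem_image.mp hs
  rw [Finset.filter_true_of_mem (fun ω _ => hY ω ω₀), Finset.card_univ, hn]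

lemma pr_comp_inj {Ω : Type} [Fintype Ω] {S T : Type} [DecidableEq S] [DecidableEq T]
    (p : Ω → ℝ) (Y : Ω → S) (f : S → T) (hf : Function.Injective f) (s : S) :
    pr p (f ∘ Y) (f s) = pr p Y s := by
  unfold pr; congr 1; funext ω; simp [hf.eq_iff]

lemma ent_comp_inj_s19 {Ω : Type} [Fintype Ω] {S T : Type} [DecidableEq S] [DecidableEq T]
    (p : Ω → ℝ) (Y : Ω → S) (f : S → T) (hf : Function.Injective f) :
    ent p (f ∘ Y) = ent p Y := by
  unfold ent
  rw [show univ.image (f ∘ Y) = (univ.image Y).image f from (Finset.image_image).symm,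
    Finset.sum_image (fun x _ y _ h => hf h)]
  congr 1
  exact Finset.sum_congr rfl fun s _ => by rw [pr_comp_inj p Y f hf]

lemma ent_comp_equiv {Ω : Type} [Fintype Ω] [DecidableEq Ω] {S : Type} [DecidableEq S]
    (c : ℝ) (Y : Ω → S) (g : Ω ≃ Ω) :
    ent (fun _ => c) (Y ∘ g) = ent (fun _ => c) Y := by
  have him : univ.image (Y ∘ g) = univ.image Y := by
    rw [show univ.image (Y ∘ g) = (univ.image g).image Y from (Finset.image_image).symm,
      Finset.image_univ_equiv]
  have hpr : ∀ s, pr (fun _ => c) (Y ∘ ⇑g) s = pr (fun _ => c) Y s := by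
    intro s
    unfold pr
    exact Equiv.sum_comp g (fun ω => if Y ω = s then c else 0)
  unfold ent
  rw [him]
  exact congrArg _ (Finset.sum_congr rfl fun s _ => by rw [hpr])

lemma ent_of_injective {Ω : Type} [Fintype Ω] {S : Type} [DecidableEq S]
    (n : ℕ) (hn0 : 0 < n) (hn : Fintype.card Ω = n) (Y : Ω → S)
    (hY : Function.Injective Y) :
    ent (fun _ => (n:ℝ)⁻¹) Y = Real.logb 2 n := by
  rw [show Real.logb 2 n = Real.logb 2 n - Real.logb 2 (1:ℕ) from by simp]
  refine ent_const_fiber n 1 one_pos hn0 hn Y fun s hs => ?_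
  obtain ⟨ω₀, -, rfl⟩ := Finset.mem_image.mp hs
  rw [Finset.card_eq_one]
  exact ⟨ω₀, by ext ω; simp [hY.eq_iff]⟩

lemma add_mod_cancel_left' {k c x y : ℕ} (hx : x < k) (hy : y < k)
    (h : (c + x) % k = (c + y) % k) : x = y := by
  have := Nat.ModEq.add_left_cancel' c (h : (c+x) ≡ (c+y) [MOD k])
  rwa [Nat.ModEq, Nat.mod_eq_of_lt hx, Nat.mod_eq_of_lt hy] at this

lemma add_mod_cancel_right' {k c x y : ℕ} (hx : x < k) (hy : y < k)
    (h : (x + c) % k = (y + c) % k) : x = y := by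
  apply add_mod_cancel_left' hx hy
  rwa [Nat.add_comm c x, Nat.add_comm c y]

lemma ent_fst {k : ℕ} (hk : 0 < k) :
    ent (fun _ : Fin k × Fin k => ((k^2:ℕ):ℝ)⁻¹) Prod.fst = Real.logb 2 k := by
  have h := ent_const_fiber (Ω := Fin k × Fin k) (k^2) k hk (by positivity)
    (by simp [pow_two]) Prod.fst (fun s _ => ?_)
  · rw [h]
    push_cast
    rw [Real.logb_pow]
    ring
  · have : (univ.filter fun ω : Fin k × Fin k => ω.1 = s) = {s} ×ˢ univ := by
      ext ⟨u,v⟩; simp [eq_comm]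
    simp [this]

lemma ent_snd {k : ℕ} (hk : 0 < k) :
    ent (fun _ : Fin k × Fin k => ((k^2:ℕ):ℝ)⁻¹) Prod.snd = Real.logb 2 k := by
  have h := ent_const_fiber (Ω := Fin k × Fin k) (k^2) k hk (by positivity)
    (by simp [pow_two]) Prod.snd (fun s _ => ?_)
  · rw [h]
    push_cast
    rw [Real.logb_pow]
    ring
  · have : (univ.filter fun ω : Fin k × Fin k => ω.2 = s) = univ ×ˢ {s} := by
      ext ⟨u,v⟩; simp [eq_comm]
    simp [this]

lemma ent_phi_fst {k t : ℕ} (hk : 0 < k) (α : Fin t → ℕ) (hα : ∀ i, 0 < α i)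
    (φ : Fin k → Fin t)
    (hφ : ∀ i, (univ.filter fun x => φ x = i).card = α i) :
    ent (fun _ : Fin k × Fin k => ((k^2:ℕ):ℝ)⁻¹) (fun ω => φ ω.1)
      = -∑ i, ((α i : ℝ)/k) * Real.logb 2 ((α i : ℝ)/k) := by
  have hk' : (k:ℝ) ≠ 0 := Nat.cast_ne_zero.mpr hk.ne'
  have him : univ.image (fun ω : Fin k × Fin k => φ ω.1) = univ := by
    apply Finset.eq_univ_of_forall
    intro i
    have hpos : 0 < (univ.filter fun x => φ x = i).card := (hφ i) ▸ hα i
    obtain ⟨x, hx⟩ := Finset.card_pos.mp hpos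
    simp only [Finset.mem_filter] at hx
    exact Finset.mem_image.mpr ⟨(x, x), mem_univ _, hx.2⟩
  have hpr : ∀ i : Fin t,
      pr (fun _ : Fin k × Fin k => ((k^2:ℕ):ℝ)⁻¹) (fun ω => φ ω.1) i = (α i : ℝ)/k := by
    intro i
    rw [pr_const]
    have hset : (univ.filter fun ω : Fin k × Fin k => φ ω.1 = i)
        = (univ.filter fun x => φ x = i) ×ˢ univ := by
      ext ⟨u,v⟩; simp [eq_comm]
    rw [hset, Finset.card_product, hφ i, Finset.card_univ, Fintype.card_fin]
    push_cast
    field_simp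
  rw [ent, him]
  simp only [hpr]

lemma ent_V23 {k t : ℕ} (hk : 0 < k) (α : Fin t → ℕ) (hα : ∀ i, 0 < α i)
    (hαsum : (∑ i, α i) = k) (φ : Fin k → Fin t)
    (hφ : ∀ i, (univ.filter fun x => φ x = i).card = α i) :
    ent (fun _ : Fin k × Fin k => ((k^2:ℕ):ℝ)⁻¹) (fun ω => (φ ω.1, ω.2))
      = Real.logb 2 k + (-∑ i, ((α i : ℝ)/k) * Real.logb 2 ((α i : ℝ)/k)) := by
  have hk' : (k:ℝ) ≠ 0 := Nat.cast_ne_zero.mpr hk.ne'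
  have him : univ.image (fun ω : Fin k × Fin k => (φ ω.1, ω.2)) = univ := by
    apply Finset.eq_univ_of_forall
    rintro ⟨i, x⟩
    have hpos : 0 < (univ.filter fun y => φ y = i).card := (hφ i) ▸ hα i
    obtain ⟨y, hy⟩ := Finset.card_pos.mp hpos
    simp only [Finset.mem_filter] at hy
    exact Finset.mem_image.mpr ⟨(y, x), mem_univ _, by simp [hy.2]⟩
  have hpr : ∀ (i : Fin t) (x : Fin k),
      pr (fun _ : Fin k × Fin k => ((k^2:ℕ):ℝ)⁻¹) (fun ω => (φ ω.1, ω.2)) (i, x)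
        = (α i : ℝ)/(k:ℝ)^2 := by
    intro i x
    rw [pr_const]
    have hset : (univ.filter fun ω : Fin k × Fin k => (φ ω.1, ω.2) = (i,x))
        = (univ.filter fun y => φ y = i) ×ˢ {x} := by
      ext ⟨u,v⟩
      simp only [Finset.mem_filter, Finset.mem_product, Finset.mem_singleton,
        Finset.mem_univ, true_and, Prod.mk.injEq]
    rw [hset, Finset.card_product, hφ i, Finset.card_singleton]
    push_cast
    field_simp
  have hsum1 : ∑ i, (α i : ℝ)/k = 1 := by
    rw [← Finset.sum_div]
    rw [show ∑ i, (α i : ℝ) = ((∑ i, α i : ℕ) : ℝ) from by push_cast; rfl, hαsum]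
    field_simp
  rw [ent, him, Fintype.sum_prod_type]
  simp only [hpr, Finset.sum_const, Finset.card_univ, Fintype.card_fin, nsmul_eq_mul]
  have key : ∀ i : Fin t, (k:ℝ) * ((α i:ℝ)/(k:ℝ)^2 * Real.logb 2 ((α i:ℝ)/(k:ℝ)^2))
      = ((α i:ℝ)/k) * Real.logb 2 ((α i:ℝ)/k) - ((α i:ℝ)/k) * Real.logb 2 k := by
    intro i
    have hαi : ((α i : ℝ)/k) ≠ 0 := by
      have := hα i
      positivity
    have h1 : (α i:ℝ)/(k:ℝ)^2 = ((α i:ℝ)/k)/k := by ring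
    rw [h1, Real.logb_div hαi hk']
    field_simp
  rw [Finset.sum_congr rfl (fun i _ => key i), Finset.sum_sub_distrib, ← Finset.sum_mul, hsum1]
  ring

/-- The full random vector `(X₁, X₂, X₃, X₄)` as a function of the sample `ω`. -/
def Yfull (k t : ℕ) (φ : Fin k → Fin t) (ω : Fin k × Fin k) (j : Fin 4) : ℕ :=
  if j = 0 then (ω.1 : ℕ)
  else if j = 1 then (φ ω.1 : ℕ)
  else if j = 2 then (ω.2 : ℕ)
  else ((ω.1 : ℕ) + (ω.2 : ℕ)) % k
/-- Achievability construction of Theorem 6: with X₁, X₃ independent uniform on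
{0,…,k−1}, X₄ = X₁ + X₃ mod k and X₂ = φ(X₁) where φ has fibers of sizes
(α i), the entropy function of (X₁,X₂,X₃,X₄) equals a·r(W^{12}₂) +
b·r(U^{134}_{2,3}) with a = H(α i / k : i) and b = log₂ k − a. -/
theorem wheel_face_construction (k t : ℕ) (hk : 0 < k)
    (α : Fin t → ℕ) (hα : ∀ i, 0 < α i) (hαsum : (∑ i, α i) = k)
    (φ : Fin k → Fin t)
    (hφ : ∀ i, (Finset.univ.filter fun x => φ x = i).card = α i)
    (a b : ℝ)
    (hadef : a = -∑ i, ((α i : ℝ) / k) * Real.logb 2 ((α i : ℝ) / k))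
    (hbdef : b = Real.logb 2 k - a) :
    ∀ A : Finset (Fin 4),
      ent (fun _ : Fin k × Fin k => ((k : ℝ) ^ 2)⁻¹)
        (fun ω (i : A) =>
          if (i : Fin 4) = 0 then (ω.1 : ℕ)
          else if (i : Fin 4) = 1 then (φ ω.1 : ℕ)
          else if (i : Fin 4) = 2 then (ω.2 : ℕ)
          else ((ω.1 : ℕ) + (ω.2 : ℕ)) % k) =
      a * rW12 A + b * rkU 2 ({0,2,3} : Finset (Fin 4)) A := by
  intro A
  haveI : NeZero k := ⟨hk.ne'⟩
  have hn0 : 0 < k^2 := by positivity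
  have hcardΩ : Fintype.card (Fin k × Fin k) = k^2 := by simp [pow_two]
  have hL2 : Real.logb 2 ((k^2:ℕ):ℝ) = 2 * Real.logb 2 k := by
    push_cast
    rw [Real.logb_pow]
    norm_num
  rw [show (fun _ : Fin k × Fin k => ((k:ℝ)^2)⁻¹)
      = (fun _ : Fin k × Fin k => ((k^2:ℕ):ℝ)⁻¹) from funext fun _ => by push_cast; rfl]
  show ent (fun _ : Fin k × Fin k => ((k^2:ℕ):ℝ)⁻¹)
      (fun ω (i : A) => Yfull k t φ ω ↑i) = a * rW12 A + b * rkU 2 ({0,2,3} : Finset (Fin 4)) A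
  by_cases h0 : (0:Fin 4) ∈ A <;> by_cases h1 : (1:Fin 4) ∈ A <;>
    by_cases h2 : (2:Fin 4) ∈ A <;> by_cases h3 : (3:Fin 4) ∈ A
  · have hA : A = ({0,1,2,3} : Finset (Fin 4)) := by ext x; fin_cases x <;> simp [h0, h1, h2, h3]
    subst hA
    have hinj : Function.Injective
        (fun ω (i : ({0,1,2,3}:Finset (Fin 4))) => Yfull k t φ ω ↑i) := by
      intro ω ω' h
      have e0 := congrFun h ⟨0, by decide⟩
      have e2 := congrFun h ⟨2, by decide⟩
      simp [Yfull] at e0 e2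
      exact Prod.ext (Fin.val_injective e0) (Fin.val_injective e2)
    rw [ent_of_injective (k^2) hn0 hcardΩ _ hinj, hL2]
    have hrw : rW12 ({0,1,2,3}:Finset (Fin 4)) = 2 := by
      rw [rW12, if_pos (by decide), if_pos (by decide), if_pos (by decide)]
      norm_num
    have hru : rkU 2 {0,2,3} ({0,1,2,3}:Finset (Fin 4)) = 2 := by
      rw [rkU, show ((({0,1,2,3}:Finset (Fin 4)) ∩ {0,2,3}).card = 3) from by decide]
      norm_num
    rw [hrw, hru, hbdef]
    ring
  · have hA : A = ({0,1,2} : Finset (Fin 4)) := by ext x; fin_cases x <;> simp [h0, h1, h2, h3]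
    subst hA
    have hinj : Function.Injective
        (fun ω (i : ({0,1,2}:Finset (Fin 4))) => Yfull k t φ ω ↑i) := by
      intro ω ω' h
      have e0 := congrFun h ⟨0, by decide⟩
      have e2 := congrFun h ⟨2, by decide⟩
      simp [Yfull] at e0 e2
      exact Prod.ext (Fin.val_injective e0) (Fin.val_injective e2)
    rw [ent_of_injective (k^2) hn0 hcardΩ _ hinj, hL2]
    have hrw : rW12 ({0,1,2}:Finset (Fin 4)) = 2 := by
      rw [rW12, if_pos (by decide), if_pos (by decide), if_neg (by decide)]
      norm_num
    have hru : rkU 2 {0,2,3} ({0,1,2}:Finset (Fin 4)) = 2 := by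
      rw [rkU, show ((({0,1,2}:Finset (Fin 4)) ∩ {0,2,3}).card = 2) from by decide]
      norm_num
    rw [hrw, hru, hbdef]
    ring
  · have hA : A = ({0,1,3} : Finset (Fin 4)) := by ext x; fin_cases x <;> simp [h0, h1, h2, h3]
    subst hA
    have hinj : Function.Injective
        (fun ω (i : ({0,1,3}:Finset (Fin 4))) => Yfull k t φ ω ↑i) := by
      intro ω ω' h
      have e0 := congrFun h ⟨0, by decide⟩
      have e3 := congrFun h ⟨3, by decide⟩
      simp [Yfull] at e0 e3
      rw [e0] at e3
      exact Prod.ext (Fin.val_injective e0)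
        (Fin.val_injective (add_mod_cancel_left' ω.2.isLt ω'.2.isLt e3))
    rw [ent_of_injective (k^2) hn0 hcardΩ _ hinj, hL2]
    have hrw : rW12 ({0,1,3}:Finset (Fin 4)) = 2 := by
      rw [rW12, if_pos (by decide), if_neg (by decide), if_pos (by decide)]
      norm_num
    have hru : rkU 2 {0,2,3} ({0,1,3}:Finset (Fin 4)) = 2 := by
      rw [rkU, show ((({0,1,3}:Finset (Fin 4)) ∩ {0,2,3}).card = 2) from by decide]
      norm_num
    rw [hrw, hru, hbdef]
    ring
  · have hA : A = ({0,1} : Finset (Fin 4)) := by ext x; fin_cases x <;> simp [h0, h1, h2, h3]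
    subst hA
    have hfinj : Function.Injective (fun (x : Fin k) (i : ({0,1}:Finset (Fin 4))) => if (↑i : Fin 4) = 0 then (x:ℕ) else (φ x : ℕ)) := by
      intro x x' h
      have e0 := congrFun h ⟨0, by decide⟩
      simp at e0
      exact Fin.val_injective e0
    have hY : (fun ω (i : ({0,1}:Finset (Fin 4))) => Yfull k t φ ω ↑i)
        = (fun (x : Fin k) (i : ({0,1}:Finset (Fin 4))) => if (↑i : Fin 4) = 0 then (x:ℕ) else (φ x : ℕ)) ∘ (Prod.fst) := by
      funext ω i
      rcases i with ⟨v, hv⟩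
      fin_cases hv <;> simp [Yfull]
    rw [hY, ent_comp_inj_s19 _ _ _ hfinj, ent_fst hk]
    have hrw : rW12 ({0,1}:Finset (Fin 4)) = 1 := by
      rw [rW12, if_pos (by decide), if_neg (by decide), if_neg (by decide)]
      norm_num
    have hru : rkU 2 {0,2,3} ({0,1}:Finset (Fin 4)) = 1 := by
      rw [rkU, show ((({0,1}:Finset (Fin 4)) ∩ {0,2,3}).card = 1) from by decide]
      norm_num
    rw [hrw, hru, hbdef]
    ring
  · have hA : A = ({0,2,3} : Finset (Fin 4)) := by ext x; fin_cases x <;> simp [h0, h1, h2, h3]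
    subst hA
    have hinj : Function.Injective
        (fun ω (i : ({0,2,3}:Finset (Fin 4))) => Yfull k t φ ω ↑i) := by
      intro ω ω' h
      have e0 := congrFun h ⟨0, by decide⟩
      have e2 := congrFun h ⟨2, by decide⟩
      simp [Yfull] at e0 e2
      exact Prod.ext (Fin.val_injective e0) (Fin.val_injective e2)
    rw [ent_of_injective (k^2) hn0 hcardΩ _ hinj, hL2]
    have hrw : rW12 ({0,2,3}:Finset (Fin 4)) = 2 := by
      rw [rW12, if_pos (by decide), if_pos (by decide), if_pos (by decide)]
      norm_num
    have hru : rkU 2 {0,2,3} ({0,2,3}:Finset (Fin 4)) = 2 := by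
      rw [rkU, show ((({0,2,3}:Finset (Fin 4)) ∩ {0,2,3}).card = 3) from by decide]
      norm_num
    rw [hrw, hru, hbdef]
    ring
  · have hA : A = ({0,2} : Finset (Fin 4)) := by ext x; fin_cases x <;> simp [h0, h1, h2, h3]
    subst hA
    have hinj : Function.Injective
        (fun ω (i : ({0,2}:Finset (Fin 4))) => Yfull k t φ ω ↑i) := by
      intro ω ω' h
      have e0 := congrFun h ⟨0, by decide⟩
      have e2 := congrFun h ⟨2, by decide⟩
      simp [Yfull] at e0 e2
      exact Prod.ext (Fin.val_injective e0) (Fin.val_injective e2)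
    rw [ent_of_injective (k^2) hn0 hcardΩ _ hinj, hL2]
    have hrw : rW12 ({0,2}:Finset (Fin 4)) = 2 := by
      rw [rW12, if_pos (by decide), if_pos (by decide), if_neg (by decide)]
      norm_num
    have hru : rkU 2 {0,2,3} ({0,2}:Finset (Fin 4)) = 2 := by
      rw [rkU, show ((({0,2}:Finset (Fin 4)) ∩ {0,2,3}).card = 2) from by decide]
      norm_num
    rw [hrw, hru, hbdef]
    ring
  · have hA : A = ({0,3} : Finset (Fin 4)) := by ext x; fin_cases x <;> simp [h0, h1, h2, h3]
    subst hA
    have hinj : Function.Injective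
        (fun ω (i : ({0,3}:Finset (Fin 4))) => Yfull k t φ ω ↑i) := by
      intro ω ω' h
      have e0 := congrFun h ⟨0, by decide⟩
      have e3 := congrFun h ⟨3, by decide⟩
      simp [Yfull] at e0 e3
      rw [e0] at e3
      exact Prod.ext (Fin.val_injective e0)
        (Fin.val_injective (add_mod_cancel_left' ω.2.isLt ω'.2.isLt e3))
    rw [ent_of_injective (k^2) hn0 hcardΩ _ hinj, hL2]
    have hrw : rW12 ({0,3}:Finset (Fin 4)) = 2 := by
      rw [rW12, if_pos (by decide), if_neg (by decide), if_pos (by decide)]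
      norm_num
    have hru : rkU 2 {0,2,3} ({0,3}:Finset (Fin 4)) = 2 := by
      rw [rkU, show ((({0,3}:Finset (Fin 4)) ∩ {0,2,3}).card = 2) from by decide]
      norm_num
    rw [hrw, hru, hbdef]
    ring
  · have hA : A = ({0} : Finset (Fin 4)) := by ext x; fin_cases x <;> simp [h0, h1, h2, h3]
    subst hA
    have hfinj : Function.Injective (fun (x : Fin k) (_ : ({0}:Finset (Fin 4))) => (x:ℕ)) := by
      intro x x' h
      exact Fin.val_injective (congrFun h ⟨0, by decide⟩)
    have hY : (fun ω (i : ({0}:Finset (Fin 4))) => Yfull k t φ ω ↑i)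
        = (fun (x : Fin k) (_ : ({0}:Finset (Fin 4))) => (x:ℕ)) ∘ (Prod.fst) := by
      funext ω i
      rcases i with ⟨v, hv⟩
      fin_cases hv <;> simp [Yfull]
    rw [hY, ent_comp_inj_s19 _ _ _ hfinj, ent_fst hk]
    have hrw : rW12 ({0}:Finset (Fin 4)) = 1 := by
      rw [rW12, if_pos (by decide), if_neg (by decide), if_neg (by decide)]
      norm_num
    have hru : rkU 2 {0,2,3} ({0}:Finset (Fin 4)) = 1 := by
      rw [rkU, show ((({0}:Finset (Fin 4)) ∩ {0,2,3}).card = 1) from by decide]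
      norm_num
    rw [hrw, hru, hbdef]
    ring
  · have hA : A = ({1,2,3} : Finset (Fin 4)) := by ext x; fin_cases x <;> simp [h0, h1, h2, h3]
    subst hA
    have hinj : Function.Injective
        (fun ω (i : ({1,2,3}:Finset (Fin 4))) => Yfull k t φ ω ↑i) := by
      intro ω ω' h
      have e2 := congrFun h ⟨2, by decide⟩
      have e3 := congrFun h ⟨3, by decide⟩
      simp [Yfull] at e2 e3
      rw [e2] at e3
      exact Prod.ext
        (Fin.val_injective (add_mod_cancel_right' ω.1.isLt ω'.1.isLt e3))
        (Fin.val_injective e2)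
    rw [ent_of_injective (k^2) hn0 hcardΩ _ hinj, hL2]
    have hrw : rW12 ({1,2,3}:Finset (Fin 4)) = 2 := by
      rw [rW12, if_pos (by decide), if_pos (by decide), if_pos (by decide)]
      norm_num
    have hru : rkU 2 {0,2,3} ({1,2,3}:Finset (Fin 4)) = 2 := by
      rw [rkU, show ((({1,2,3}:Finset (Fin 4)) ∩ {0,2,3}).card = 2) from by decide]
      norm_num
    rw [hrw, hru, hbdef]
    ring
  · have hA : A = ({1,2} : Finset (Fin 4)) := by ext x; fin_cases x <;> simp [h0, h1, h2, h3]
    subst hA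
    have hfinj : Function.Injective (fun (q : Fin t × Fin k) (i : ({1,2}:Finset (Fin 4))) => if (↑i : Fin 4) = 1 then (q.1:ℕ) else (q.2:ℕ)) := by
      intro x x' h
      have e1 := congrFun h ⟨1, by decide⟩
      have e2 := congrFun h ⟨2, by decide⟩
      simp at e1 e2
      exact Prod.ext (Fin.val_injective e1) (Fin.val_injective e2)
    have hY : (fun ω (i : ({1,2}:Finset (Fin 4))) => Yfull k t φ ω ↑i)
        = (fun (q : Fin t × Fin k) (i : ({1,2}:Finset (Fin 4))) => if (↑i : Fin 4) = 1 then (q.1:ℕ) else (q.2:ℕ)) ∘ (fun ω : Fin k × Fin k => (φ ω.1, ω.2)) := by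
      funext ω i
      rcases i with ⟨v, hv⟩
      fin_cases hv <;> simp [Yfull]
    rw [hY, ent_comp_inj_s19 _ _ _ hfinj, ent_V23 hk α hα hαsum φ hφ, ← hadef]
    have hrw : rW12 ({1,2}:Finset (Fin 4)) = 2 := by
      rw [rW12, if_pos (by decide), if_pos (by decide), if_neg (by decide)]
      norm_num
    have hru : rkU 2 {0,2,3} ({1,2}:Finset (Fin 4)) = 1 := by
      rw [rkU, show ((({1,2}:Finset (Fin 4)) ∩ {0,2,3}).card = 1) from by decide]
      norm_num
    rw [hrw, hru, hbdef]
    ring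
  · have hA : A = ({1,3} : Finset (Fin 4)) := by ext x; fin_cases x <;> simp [h0, h1, h2, h3]
    subst hA
    have hfinj : Function.Injective (fun (q : Fin t × Fin k) (i : ({1,3}:Finset (Fin 4))) => if (↑i : Fin 4) = 1 then (q.1:ℕ) else (q.2:ℕ)) := by
      intro x x' h
      have e1 := congrFun h ⟨1, by decide⟩
      have e3 := congrFun h ⟨3, by decide⟩
      simp at e1 e3
      exact Prod.ext (Fin.val_injective e1) (Fin.val_injective e3)
    have hY : (fun ω (i : ({1,3}:Finset (Fin 4))) => Yfull k t φ ω ↑i)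
        = (fun (q : Fin t × Fin k) (i : ({1,3}:Finset (Fin 4))) => if (↑i : Fin 4) = 1 then (q.1:ℕ) else (q.2:ℕ)) ∘ (fun ω : Fin k × Fin k => (φ ω.1, ω.1 + ω.2)) := by
      funext ω i
      rcases i with ⟨v, hv⟩
      fin_cases hv <;> simp [Yfull, Fin.val_add]
    rw [hY, ent_comp_inj_s19 _ _ _ hfinj, show (fun ω : Fin k × Fin k => (φ ω.1, ω.1 + ω.2))
        = (fun ω : Fin k × Fin k => (φ ω.1, ω.2)) ∘
          ⇑(Equiv.prodShear (Equiv.refl (Fin k)) (fun x => Equiv.addLeft x)) from rfl,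
      ent_comp_equiv, ent_V23 hk α hα hαsum φ hφ, ← hadef]
    have hrw : rW12 ({1,3}:Finset (Fin 4)) = 2 := by
      rw [rW12, if_pos (by decide), if_neg (by decide), if_pos (by decide)]
      norm_num
    have hru : rkU 2 {0,2,3} ({1,3}:Finset (Fin 4)) = 1 := by
      rw [rkU, show ((({1,3}:Finset (Fin 4)) ∩ {0,2,3}).card = 1) from by decide]
      norm_num
    rw [hrw, hru, hbdef]
    ring
  · have hA : A = ({1} : Finset (Fin 4)) := by ext x; fin_cases x <;> simp [h0, h1, h2, h3]
    subst hA
    have hfinj : Function.Injective (fun (i0 : Fin t) (_ : ({1}:Finset (Fin 4))) => (i0:ℕ)) := by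
      intro x x' h
      exact Fin.val_injective (congrFun h ⟨1, by decide⟩)
    have hY : (fun ω (i : ({1}:Finset (Fin 4))) => Yfull k t φ ω ↑i)
        = (fun (i0 : Fin t) (_ : ({1}:Finset (Fin 4))) => (i0:ℕ)) ∘ (fun ω : Fin k × Fin k => φ ω.1) := by
      funext ω i
      rcases i with ⟨v, hv⟩
      fin_cases hv <;> simp [Yfull]
    rw [hY, ent_comp_inj_s19 _ _ _ hfinj, ent_phi_fst hk α hα φ hφ, ← hadef]
    have hrw : rW12 ({1}:Finset (Fin 4)) = 1 := by
      rw [rW12, if_pos (by decide), if_neg (by decide), if_neg (by decide)]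
      norm_num
    have hru : rkU 2 {0,2,3} ({1}:Finset (Fin 4)) = 0 := by
      rw [rkU, show ((({1}:Finset (Fin 4)) ∩ {0,2,3}).card = 0) from by decide]
      norm_num
    rw [hrw, hru, hbdef]
    ring
  · have hA : A = ({2,3} : Finset (Fin 4)) := by ext x; fin_cases x <;> simp [h0, h1, h2, h3]
    subst hA
    have hinj : Function.Injective
        (fun ω (i : ({2,3}:Finset (Fin 4))) => Yfull k t φ ω ↑i) := by
      intro ω ω' h
      have e2 := congrFun h ⟨2, by decide⟩
      have e3 := congrFun h ⟨3, by decide⟩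
      simp [Yfull] at e2 e3
      rw [e2] at e3
      exact Prod.ext
        (Fin.val_injective (add_mod_cancel_right' ω.1.isLt ω'.1.isLt e3))
        (Fin.val_injective e2)
    rw [ent_of_injective (k^2) hn0 hcardΩ _ hinj, hL2]
    have hrw : rW12 ({2,3}:Finset (Fin 4)) = 2 := by
      rw [rW12, if_neg (by decide), if_pos (by decide), if_pos (by decide)]
      norm_num
    have hru : rkU 2 {0,2,3} ({2,3}:Finset (Fin 4)) = 2 := by
      rw [rkU, show ((({2,3}:Finset (Fin 4)) ∩ {0,2,3}).card = 2) from by decide]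
      norm_num
    rw [hrw, hru, hbdef]
    ring
  · have hA : A = ({2} : Finset (Fin 4)) := by ext x; fin_cases x <;> simp [h0, h1, h2, h3]
    subst hA
    have hfinj : Function.Injective (fun (x : Fin k) (_ : ({2}:Finset (Fin 4))) => (x:ℕ)) := by
      intro x x' h
      exact Fin.val_injective (congrFun h ⟨2, by decide⟩)
    have hY : (fun ω (i : ({2}:Finset (Fin 4))) => Yfull k t φ ω ↑i)
        = (fun (x : Fin k) (_ : ({2}:Finset (Fin 4))) => (x:ℕ)) ∘ (Prod.snd) := by
      funext ω i
      rcases i with ⟨v, hv⟩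
      fin_cases hv <;> simp [Yfull]
    rw [hY, ent_comp_inj_s19 _ _ _ hfinj, ent_snd hk]
    have hrw : rW12 ({2}:Finset (Fin 4)) = 1 := by
      rw [rW12, if_neg (by decide), if_pos (by decide), if_neg (by decide)]
      norm_num
    have hru : rkU 2 {0,2,3} ({2}:Finset (Fin 4)) = 1 := by
      rw [rkU, show ((({2}:Finset (Fin 4)) ∩ {0,2,3}).card = 1) from by decide]
      norm_num
    rw [hrw, hru, hbdef]
    ring
  · have hA : A = ({3} : Finset (Fin 4)) := by ext x; fin_cases x <;> simp [h0, h1, h2, h3]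
    subst hA
    have hfinj : Function.Injective (fun (x : Fin k) (_ : ({3}:Finset (Fin 4))) => (x:ℕ)) := by
      intro x x' h
      exact Fin.val_injective (congrFun h ⟨3, by decide⟩)
    have hY : (fun ω (i : ({3}:Finset (Fin 4))) => Yfull k t φ ω ↑i)
        = (fun (x : Fin k) (_ : ({3}:Finset (Fin 4))) => (x:ℕ)) ∘ (fun ω : Fin k × Fin k => ω.1 + ω.2) := by
      funext ω i
      rcases i with ⟨v, hv⟩
      fin_cases hv <;> simp [Yfull, Fin.val_add]
    rw [hY, ent_comp_inj_s19 _ _ _ hfinj, show (fun ω : Fin k × Fin k => ω.1 + ω.2) = Prod.snd ∘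
        ⇑(Equiv.prodShear (Equiv.refl (Fin k)) (fun x => Equiv.addLeft x)) from rfl,
      ent_comp_equiv, ent_snd hk]
    have hrw : rW12 ({3}:Finset (Fin 4)) = 1 := by
      rw [rW12, if_neg (by decide), if_neg (by decide), if_pos (by decide)]
      norm_num
    have hru : rkU 2 {0,2,3} ({3}:Finset (Fin 4)) = 1 := by
      rw [rkU, show ((({3}:Finset (Fin 4)) ∩ {0,2,3}).card = 1) from by decide]
      norm_num
    rw [hrw, hru, hbdef]
    ring
  · have hA : A = (∅ : Finset (Fin 4)) := by ext x; fin_cases x <;> simp [h0, h1, h2, h3]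
    subst hA
    have hc : ∀ ω ω' : Fin k × Fin k,
        (fun (i : ((∅:Finset (Fin 4)))) => Yfull k t φ ω ↑i)
          = (fun (i : ((∅:Finset (Fin 4)))) => Yfull k t φ ω' ↑i) :=
      fun ω ω' => funext fun i => (Finset.notMem_empty _ i.2).elim
    rw [ent_subsingleton (k^2) hn0 hcardΩ _ hc]
    have hrw : rW12 (∅:Finset (Fin 4)) = 0 := by
      rw [rW12, if_neg (by decide), if_neg (by decide), if_neg (by decide)]
      norm_num
    have hru : rkU 2 {0,2,3} (∅:Finset (Fin 4)) = 0 := by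
      rw [rkU, show (((∅:Finset (Fin 4)) ∩ {0,2,3}).card = 0) from by decide]
      norm_num
    rw [hrw, hru, hbdef]
    ring
end
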